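/- arXiv:2311.18426 — 7 statements merged into one kernel-verified Lean document; each statement's English description precedes it below -/
import Mathlib

section
/- Let n ≥ 1 be an integer, let f : ℝ → ℝ be (n+1)-times continuously differentiable, and let x, c ∈ ℝ. Then the limit, as α tends to n from the left, of (sgn(x−c))^{n−1}/Γ(n−α) · ∫_c^x f^{(n)}(t)/|x−t|^{α−n+1} dt equals (sgn(x−c))^n · f^{(n)}(x). -/
open Filter Set intervalIntegral MeasureTheory

lemma myAux.div_rpow_neg (u v e : ℝ) (hv : 0 ≤ v) :
    u / v ^ e = u * v ^ (-e) := by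
  rcases eq_or_lt_of_le hv with h | h
  · rcases eq_or_ne e 0 with he | he
    · simp [he]
    · rw [← h, Real.zero_rpow he, Real.zero_rpow (neg_ne_zero.2 he)]
      simp
  · rw [Real.rpow_neg h.le, div_eq_mul_inv]

lemma myAux.intervalIntegrable_sub_rpow (a b : ℝ) {r : ℝ} (hr : -1 < r) :
    IntervalIntegrable (fun t => (b - t) ^ r) volume a b := by
  have h := (intervalIntegrable_rpow' (a := b - b) (b := b - a) hr).comp_sub_left b
  simpa using h.symm

lemma myAux.integral_sub_rpow (a b : ℝ) {r : ℝ} (hr : -1 < r) :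
    ∫ t in a..b, (b - t) ^ r = (b - a) ^ (r + 1) / (r + 1) := by
  have h := intervalIntegral.integral_comp_sub_left (a := a) (b := b) (fun s => s ^ r) b
  rw [h, sub_self, integral_rpow (Or.inl hr),
    Real.zero_rpow (by linarith : r + 1 ≠ 0), sub_zero]

lemma myAux.key (g : ℝ → ℝ) (a b : ℝ) (hab : a < b) (hg : Continuous g) (M : ℝ)
    (hM0 : 0 ≤ M) (hM : ∀ t ∈ Set.Icc a b, |g t - g b| ≤ M * (b - t)) :
    Filter.Tendsto (fun β : ℝ => (Real.Gamma β)⁻¹ * ∫ t in a..b, g t * (b - t) ^ (β - 1))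
      (nhdsWithin 0 (Set.Ioi (0 : ℝ))) (nhds (g b)) := by
  set R : ℝ → ℝ := fun β => ∫ t in a..b, (g t - g b) * (b - t) ^ (β - 1) with hRdef
  have hIco : ∀ β : ℝ, 0 < β →
      IntervalIntegrable (fun t => (b - t) ^ (β - 1)) volume a b := fun β hβ =>
    myAux.intervalIntegrable_sub_rpow a b (by linarith)
  have hInt1 : ∀ β : ℝ, 0 < β →
      IntervalIntegrable (fun t => (g t - g b) * (b - t) ^ (β - 1)) volume a b := by
    intro β hβ
    exact (hIco β hβ).continuousOn_mul ((hg.sub continuous_const).continuousOn)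
  -- eventual equality
  have heq : ∀ᶠ β in nhdsWithin 0 (Set.Ioi (0 : ℝ)),
      (Real.Gamma β)⁻¹ * ∫ t in a..b, g t * (b - t) ^ (β - 1)
        = (g b * (b - a) ^ β + β * R β) / Real.Gamma (β + 1) := by
    filter_upwards [self_mem_nhdsWithin] with β (hβ : 0 < β)
    have h1 : (∫ t in a..b, g t * (b - t) ^ (β - 1))
        = g b * ((b - a) ^ β / β) + R β := by
      have hsplit : (fun t => g t * (b - t) ^ (β - 1)) =
          fun t => g b * (b - t) ^ (β - 1) + (g t - g b) * (b - t) ^ (β - 1) := by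
        funext t; ring
      rw [hsplit, intervalIntegral.integral_add ((hIco β hβ).const_mul _) (hInt1 β hβ),
        intervalIntegral.integral_const_mul, myAux.integral_sub_rpow a b (by linarith)]
      norm_num
      rfl
    have hGamma : Real.Gamma (β + 1) = β * Real.Gamma β := Real.Gamma_add_one hβ.ne'
    have hGpos : 0 < Real.Gamma β := Real.Gamma_pos_of_pos hβ
    rw [h1, hGamma]
    field_simp
  have hbapos : 0 < b - a := by linarith
  -- limit of the RHS
  have h2 : Filter.Tendsto (fun β : ℝ => (b - a) ^ β) (nhds 0) (nhds 1) := by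
    have := (Real.continuousAt_const_rpow (a := b - a) (b := 0) hbapos.ne').tendsto
    simpa using this
  have h4 : Filter.Tendsto (fun β : ℝ => Real.Gamma (β + 1)) (nhds 0) (nhds 1) := by
    have hc : ContinuousAt Real.Gamma 1 := by
      refine (Real.differentiableAt_Gamma ?_).continuousAt
      intro m
      have : (0:ℝ) < 1 := one_pos
      intro h
      have : (0:ℝ) ≤ m := Nat.cast_nonneg m
      nlinarith [h]
    have : Filter.Tendsto (fun β : ℝ => β + 1) (nhds 0) (nhds 1) := by
      have := (continuous_add_right (1:ℝ)).tendsto 0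
      simpa using this
    simpa [Real.Gamma_one, Function.comp_def] using hc.tendsto.comp this
  -- squeeze for β * R β
  have h3 : Filter.Tendsto (fun β : ℝ => β * R β) (nhdsWithin 0 (Set.Ioi (0:ℝ))) (nhds 0) := by
    have hbound : ∀ᶠ β in nhdsWithin 0 (Set.Ioi (0:ℝ)),
        ‖β * R β‖ ≤ β * (M * ((b - a) ^ (β + 1) / (β + 1))) := by
      filter_upwards [self_mem_nhdsWithin] with β (hβ : 0 < β)
      have hRb : |R β| ≤ M * ((b - a) ^ (β + 1) / (β + 1)) := by
        have hptw : ∀ᵐ t ∂(volume.restrict (Set.uIoc a b)),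
            ‖(g t - g b) * (b - t) ^ (β - 1)‖ ≤ M * (b - t) ^ β := by
          refine (MeasureTheory.ae_restrict_iff' measurableSet_uIoc).2 ?_
          filter_upwards with t ht
          rw [Set.uIoc_of_le hab.le] at ht
          have htb : t ≤ b := ht.2
          have hta : a < t := ht.1
          rcases eq_or_lt_of_le htb with h | h
          · subst h
            simp [Real.zero_rpow hβ.ne']
          · have hbt : 0 < b - t := by linarith
            have h1 : ‖(g t - g b) * (b - t) ^ (β - 1)‖
                = |g t - g b| * (b - t) ^ (β - 1) := by
              rw [norm_mul, Real.norm_eq_abs, Real.norm_eq_abs,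
                abs_of_nonneg (Real.rpow_nonneg hbt.le _)]
            rw [h1]
            have h2 : |g t - g b| * (b - t) ^ (β - 1) ≤ (M * (b - t)) * (b - t) ^ (β - 1) :=
              mul_le_mul_of_nonneg_right (hM t ⟨hta.le, htb⟩) (Real.rpow_nonneg hbt.le _)
            refine h2.trans_eq ?_
            rw [mul_assoc, ← Real.rpow_one_add' hbt.le (by linarith)]
            ring_nf
        have hb1 := intervalIntegral.norm_integral_le_abs_of_norm_le hptw
          (((myAux.intervalIntegrable_sub_rpow a b (by linarith : (-1:ℝ) < β)).const_mul M))
        rw [intervalIntegral.integral_const_mul,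
          myAux.integral_sub_rpow a b (by linarith : (-1:ℝ) < β)] at hb1
        have habs : |M * ((b - a) ^ (β + 1) / (β + 1))| = M * ((b - a) ^ (β + 1) / (β + 1)) := by
          refine abs_of_nonneg ?_
          have : (0:ℝ) ≤ (b - a) ^ (β + 1) := Real.rpow_nonneg hbapos.le _
          positivity
        rw [habs] at hb1
        simpa [hRdef] using hb1
      rw [norm_mul, Real.norm_eq_abs, Real.norm_eq_abs, abs_of_pos hβ]
      exact mul_le_mul_of_nonneg_left hRb hβ.le
    have hBt : Filter.Tendsto
        (fun β : ℝ => β * (M * ((b - a) ^ (β + 1) / (β + 1)))) (nhds 0) (nhds 0) := by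
      have hc : ContinuousAt
          (fun β : ℝ => β * (M * ((b - a) ^ (β + 1) / (β + 1)))) 0 := by
        have h1 : ContinuousAt (fun β : ℝ => (b - a) ^ (β + 1)) 0 :=
          (Real.continuousAt_const_rpow hbapos.ne').comp
            ((continuous_add_right (1:ℝ)).continuousAt)
        exact continuousAt_id.mul (continuousAt_const.mul
          (h1.div ((continuous_add_right (1:ℝ)).continuousAt) (by norm_num)))
      simpa using hc.tendsto
    exact squeeze_zero_norm' hbound (hBt.mono_left nhdsWithin_le_nhds)
  have hF : Filter.Tendsto (fun β : ℝ => (g b * (b - a) ^ β + β * R β) / Real.Gamma (β + 1))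
      (nhdsWithin 0 (Set.Ioi (0:ℝ))) (nhds (g b)) := by
    have hnum : Filter.Tendsto (fun β : ℝ => g b * (b - a) ^ β + β * R β)
        (nhdsWithin 0 (Set.Ioi (0:ℝ))) (nhds (g b * 1 + 0)) :=
      ((tendsto_const_nhds (x := g b)).mul (h2.mono_left nhdsWithin_le_nhds)).add h3
    have := hnum.div (h4.mono_left nhdsWithin_le_nhds) one_ne_zero
    simp only [mul_one, add_zero, div_one] at this
    exact this
  exact hF.congr' (Filter.EventuallyEq.symm heq)

/-- MVT bound for `iteratedDeriv n f` on a compact interval. -/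
lemma myAux.exists_bound (n : ℕ) (f : ℝ → ℝ) (hf : ContDiff ℝ (n + 1 : ℕ) f) (p q : ℝ) :
    ∃ M : ℝ, 0 ≤ M ∧ ∀ s ∈ Set.Icc p q, ∀ t ∈ Set.Icc p q,
      |iteratedDeriv n f s - iteratedDeriv n f t| ≤ M * |s - t| := by
  have hdc : Continuous (iteratedDeriv (n + 1) f) :=
    hf.continuous_iteratedDeriv (n + 1) (by exact_mod_cast le_refl (n+1))
  obtain ⟨C, hC⟩ := (isCompact_Icc (a := p) (b := q)).exists_bound_of_continuousOn
    hdc.continuousOn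
  refine ⟨max C 0, le_max_right _ _, fun s hs t ht => ?_⟩
  have hdiff : ∀ u ∈ Set.Icc p q, DifferentiableAt ℝ (iteratedDeriv n f) u := fun u _ =>
    hf.differentiable_iteratedDeriv n (by exact_mod_cast Nat.lt_succ_self n) u
  have hbd : ∀ u ∈ Set.Icc p q, ‖deriv (iteratedDeriv n f) u‖ ≤ max C 0 := by
    intro u hu
    rw [← iteratedDeriv_succ]
    exact (hC u hu).trans (le_max_left _ _)
  have := Convex.norm_image_sub_le_of_norm_deriv_le hdiff hbd (convex_Icc p q) ht hs
  simpa [Real.norm_eq_abs] using this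



/-- For an `(n+1)`-times continuously differentiable `f : ℝ → ℝ`, the Caputo
derivative of order `α` with terminal `c` tends to `sgn(x-c)^n · f^(n)(x)` as `α → n⁻`. -/
theorem caputo_tendsto_of_order_tendsto_ceil (n : ℕ) (hn : 1 ≤ n) (f : ℝ → ℝ)
    (hf : ContDiff ℝ (n + 1 : ℕ) f) (x c : ℝ) :
    Filter.Tendsto
      (fun α : ℝ => (Real.sign (x - c)) ^ (n - 1) / Real.Gamma ((n : ℝ) - α) *
        ∫ t in c..x, iteratedDeriv n f t / |x - t| ^ (α - (n : ℝ) + 1))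
      (nhdsWithin (n : ℝ) (Set.Iio (n : ℝ)))
      (nhds ((Real.sign (x - c)) ^ n * iteratedDeriv n f x)) := by
  set g := iteratedDeriv n f with hgdef
  have hg : Continuous g := hf.continuous_iteratedDeriv n (by exact_mod_cast Nat.le_succ n)
  have htend : Filter.Tendsto (fun α : ℝ => (n:ℝ) - α)
      (nhdsWithin (n:ℝ) (Set.Iio (n:ℝ))) (nhdsWithin 0 (Set.Ioi (0:ℝ))) := by
    refine tendsto_nhdsWithin_of_tendsto_nhds_of_eventually_within _ ?_ ?_
    · have h0 : Filter.Tendsto (fun α : ℝ => (n:ℝ) - α) (nhds (n:ℝ)) (nhds ((n:ℝ) - n)) :=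
        (continuous_const.sub continuous_id).tendsto _
      rw [sub_self] at h0
      exact h0.mono_left nhdsWithin_le_nhds
    · filter_upwards [self_mem_nhdsWithin] with α (hα : α < (n:ℝ))
      exact sub_pos.2 hα
  rcases lt_trichotomy x c with hxc | hxc | hxc
  · -- x < c
    have hsgn : Real.sign (x - c) = -1 := Real.sign_of_neg (by linarith)
    obtain ⟨M, hM0, hM⟩ := myAux.exists_bound n f hf x c
    have hg' : Continuous fun s : ℝ => g (x + c - s) :=
      hg.comp (continuous_const.sub continuous_id)
    have hM' : ∀ t ∈ Set.Icc x c, |g (x + c - t) - g (x + c - c)| ≤ M * (c - t) := by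
      intro t ht
      have hmem : x + c - t ∈ Set.Icc x c := ⟨by linarith [ht.2], by linarith [ht.1]⟩
      have h2 := hM (x + c - t) hmem x ⟨le_refl x, hxc.le⟩
      rw [show x + c - c = x by ring]
      rw [show |x + c - t - x| = c - t by rw [abs_of_nonneg (by linarith [ht.2])]; ring] at h2
      exact h2
    have hkey := myAux.key (fun s => g (x + c - s)) x c hxc hg' M hM0 hM'
    have hflip : ∀ β : ℝ, (∫ t in x..c, g (x + c - t) * (c - t) ^ (β - 1))
        = ∫ t in x..c, g t * (t - x) ^ (β - 1) := by
      intro β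
      have h := intervalIntegral.integral_comp_sub_left (a := x) (b := c)
        (fun s => g s * (s - x) ^ (β - 1)) (x + c)
      simp only [show ∀ t : ℝ, x + c - t - x = c - t from fun t => by ring,
        add_sub_cancel_right, add_sub_cancel_left] at h
      exact h
    have hcomp := hkey.comp htend
    have hfun : ∀ α : ℝ,
        (Real.sign (x - c)) ^ (n - 1) / Real.Gamma ((n:ℝ) - α) *
          ∫ t in c..x, g t / |x - t| ^ (α - (n:ℝ) + 1)
        = (-1 : ℝ) ^ n * ((Real.Gamma ((n:ℝ) - α))⁻¹ *
            ∫ t in x..c, g (x + c - t) * (c - t) ^ (((n:ℝ) - α) - 1)) := by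
      intro α
      rw [hsgn]
      have hIcong : (∫ t in x..c, g t / |x - t| ^ (α - (n:ℝ) + 1))
          = ∫ t in x..c, g t * (t - x) ^ (((n:ℝ) - α) - 1) := by
        refine intervalIntegral.integral_congr fun t ht => ?_
        rw [Set.uIcc_of_le hxc.le] at ht
        rw [show |x - t| = t - x by rw [abs_of_nonpos (by linarith [ht.1])]; ring,
          myAux.div_rpow_neg _ _ _ (by linarith [ht.1]),
          show -(α - (n:ℝ) + 1) = (n:ℝ) - α - 1 by ring]
      rw [intervalIntegral.integral_symm x c, hIcong, hflip,
        show (-1:ℝ)^n = (-1:ℝ)^(n-1) * (-1) by rw [← pow_succ]; congr 1; omega,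
        div_eq_mul_inv]
      ring
    rw [show Real.sign (x - c) ^ n * g x = (-1:ℝ) ^ n * g (x + c - c) by
      rw [hsgn, show x + c - c = x by ring]]
    exact (hcomp.const_mul ((-1:ℝ)^n)).congr fun α => (hfun α).symm
  · -- x = c
    subst hxc
    simp only [sub_self, intervalIntegral.integral_same, mul_zero, Real.sign_zero,
      zero_pow (by omega : n ≠ 0), zero_mul]
    exact tendsto_const_nhds
  · -- c < x
    have hsgn : Real.sign (x - c) = 1 := Real.sign_of_pos (by linarith)
    obtain ⟨M, hM0, hM⟩ := myAux.exists_bound n f hf c x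
    have hM' : ∀ t ∈ Set.Icc c x, |g t - g x| ≤ M * (x - t) := by
      intro t ht
      have h2 := hM t ht x ⟨hxc.le, le_refl x⟩
      rwa [show |t - x| = x - t by rw [abs_of_nonpos (by linarith [ht.2])]; ring] at h2
    have hkey := myAux.key g c x hxc hg M hM0 hM'
    have hcomp := hkey.comp htend
    have hfun : ∀ α : ℝ,
        (Real.sign (x - c)) ^ (n - 1) / Real.Gamma ((n:ℝ) - α) *
          ∫ t in c..x, g t / |x - t| ^ (α - (n:ℝ) + 1)
        = (Real.Gamma ((n:ℝ) - α))⁻¹ * ∫ t in c..x, g t * (x - t) ^ (((n:ℝ) - α) - 1) := by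
      intro α
      rw [hsgn, one_pow, one_div]
      congr 1
      refine intervalIntegral.integral_congr fun t ht => ?_
      rw [Set.uIcc_of_le hxc.le] at ht
      rw [show |x - t| = x - t from abs_of_nonneg (by linarith [ht.2]),
        myAux.div_rpow_neg _ _ _ (by linarith [ht.2]),
        show -(α - (n:ℝ) + 1) = (n:ℝ) - α - 1 by ring]
    rw [show Real.sign (x - c) ^ n * g x = g x by rw [hsgn, one_pow, one_mul]]
    exact hcomp.congr fun α => (hfun α).symm
end

section
/- Let n ≥ 1 be an integer, let f : ℝ → ℝ be n-times continuously differentiable, and let x, c ∈ ℝ. Then the limit, as α tends to n−1 from the right, of (sgn(x−c))^{n−1}/Γ(n−α) · ∫_c^x f^{(n)}(t)/|x−t|^{α−n+1} dt equals (sgn(x−c))^{n−1} · (f^{(n−1)}(x) − f^{(n−1)}(c)). -/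
open MeasureTheory Set Filter intervalIntegral Real

-- integrability of |x - t|^r on uIoc c x for r > -1
lemma aux_abs_rpow_integrableOn (x c : ℝ) {r : ℝ} (hr : -1 < r) :
    IntegrableOn (fun t => |x - t| ^ r) (Set.uIoc c x) := by
  rcases le_total c x with h | h
  · have h1 : IntervalIntegrable (fun s : ℝ => s ^ r) volume 0 (x - c) :=
      intervalIntegral.intervalIntegrable_rpow' hr
    have h2 := h1.comp_sub_left x
    simp only [sub_zero, sub_sub_cancel] at h2
    rw [intervalIntegrable_iff] at h2
    rw [Set.uIoc_of_le h]
    rw [Set.uIoc_comm, Set.uIoc_of_le h] at h2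
    exact h2.congr_fun (fun t ht => by rw [abs_of_nonneg (by linarith [ht.2] : (0:ℝ) ≤ x - t)])
      measurableSet_Ioc
  · have h1 : IntervalIntegrable (fun s : ℝ => s ^ r) volume 0 (c - x) :=
      intervalIntegral.intervalIntegrable_rpow' hr
    have h2 := h1.comp_sub_right x
    simp only [zero_add, sub_add_cancel] at h2
    rw [intervalIntegrable_iff] at h2
    rw [Set.uIoc_of_ge h]
    rw [Set.uIoc_of_le h] at h2
    refine h2.congr_fun (fun t ht => ?_) measurableSet_Ioc
    rw [abs_of_nonpos (by linarith [ht.1] : x - t ≤ 0), neg_sub]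

lemma aux_key0 (g : ℝ → ℝ) (hg : Continuous g) (x c : ℝ) :
    Tendsto (fun β : ℝ => ∫ t in c..x, g t / |x - t| ^ β) (nhdsWithin 0 (Set.Ioi 0))
      (nhds (∫ t in c..x, g t)) := by
  obtain ⟨C, hC⟩ := (isCompact_uIcc (a := c) (b := x)).exists_bound_of_continuousOn
    hg.continuousOn
  have hC0 : 0 ≤ C := le_trans (norm_nonneg _) (hC c Set.left_mem_uIcc)
  apply intervalIntegral.tendsto_integral_filter_of_dominated_convergence
    (bound := fun t => C * (1 + |x - t| ^ (-(1/2) : ℝ)))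
  · refine Filter.Eventually.of_forall fun β => ?_
    exact (hg.measurable.div
      ((continuous_const.sub continuous_id).abs.measurable.pow_const β)).aestronglyMeasurable
  · filter_upwards [Ioc_mem_nhdsGT (by norm_num : (0:ℝ) < 1/2)] with β hβ
    refine Filter.Eventually.of_forall fun t ht => ?_
    have htc : t ∈ Set.uIcc c x := Set.uIoc_subset_uIcc ht
    rcases eq_or_ne t x with rfl | htx
    · simp only [sub_self, abs_zero, Real.zero_rpow (ne_of_gt hβ.1), div_zero, norm_zero]
      positivity
    · have hb : 0 < |x - t| := abs_pos.mpr (sub_ne_zero.mpr (Ne.symm htx))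
      rw [norm_div, Real.norm_eq_abs, Real.norm_eq_abs,
        abs_of_nonneg (Real.rpow_nonneg (abs_nonneg _) β), div_eq_mul_inv,
        ← Real.rpow_neg (abs_nonneg _)]
      have hle : |x - t| ^ (-β) ≤ 1 + |x - t| ^ (-(1/2) : ℝ) := by
        rcases le_total 1 (|x - t|) with hb1 | hb1
        · have h2 : |x - t| ^ (-β) ≤ 1 :=
            Real.rpow_le_one_of_one_le_of_nonpos hb1 (by linarith [hβ.1])
          have h3 : (0:ℝ) ≤ |x - t| ^ (-(1/2) : ℝ) := Real.rpow_nonneg (abs_nonneg _) _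
          linarith
        · have h2 : |x - t| ^ (-β) ≤ |x - t| ^ (-(1/2) : ℝ) :=
            Real.rpow_le_rpow_of_exponent_ge hb hb1 (by linarith [hβ.2])
          linarith
      exact mul_le_mul (hC t htc) hle (Real.rpow_nonneg (abs_nonneg _) _) hC0
  · refine IntervalIntegrable.const_mul ?_ C
    rw [intervalIntegrable_iff]
    exact (integrableOn_const (by rw [Set.uIoc]; exact measure_Ioc_lt_top.ne)).add
      (aux_abs_rpow_integrableOn x c (by norm_num))
  · have hne : ∀ᵐ t : ℝ, t ≠ x := by
      refine MeasureTheory.ae_iff.mpr ?_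
      have hs : {a : ℝ | ¬a ≠ x} = {x} := by ext a; simp
      rw [hs]
      exact measure_singleton x
    filter_upwards [hne] with t htx _
    have hb : 0 < |x - t| := abs_pos.mpr (sub_ne_zero.mpr (Ne.symm htx))
    have hcont : Tendsto (fun β : ℝ => |x - t| ^ β) (nhds 0) (nhds 1) := by
      have hc : Continuous fun β : ℝ => |x - t| ^ β := by
        simp only [Real.rpow_def_of_pos hb]
        exact Real.continuous_exp.comp (continuous_const.mul continuous_id)
      simpa using hc.tendsto 0
    have h4 := (tendsto_const_nhds (x := g t)).div hcont one_ne_zero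
    rw [div_one] at h4
    exact h4.mono_left nhdsWithin_le_nhds

/-- For an `n`-times continuously differentiable `f : ℝ → ℝ`, the Caputo
derivative of order `α` with terminal `c` tends to
`sgn(x-c)^(n-1) · (f^(n-1)(x) - f^(n-1)(c))` as `α → (n-1)⁺`. -/
theorem caputo_tendsto_of_order_tendsto_floor (n : ℕ) (hn : 1 ≤ n) (f : ℝ → ℝ)
    (hf : ContDiff ℝ (n : ℕ) f) (x c : ℝ) :
    Filter.Tendsto
      (fun α : ℝ => (Real.sign (x - c)) ^ (n - 1) / Real.Gamma ((n : ℝ) - α) *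
        ∫ t in c..x, iteratedDeriv n f t / |x - t| ^ (α - (n : ℝ) + 1))
      (nhdsWithin ((n : ℝ) - 1) (Set.Ioi ((n : ℝ) - 1)))
      (nhds ((Real.sign (x - c)) ^ (n - 1) *
        (iteratedDeriv (n - 1) f x - iteratedDeriv (n - 1) f c))) := by
  obtain ⟨m, rfl⟩ : ∃ m, n = m + 1 := ⟨n - 1, (Nat.succ_pred_eq_of_pos hn).symm⟩
  set g := iteratedDeriv (m + 1) f with hg_def
  have hgc : Continuous g := hf.continuous_iteratedDeriv (m + 1) le_rfl
  -- FTC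
  have hFTC : (∫ t in c..x, g t) =
      iteratedDeriv m f x - iteratedDeriv m f c := by
    rw [hg_def, iteratedDeriv_succ]
    apply intervalIntegral.integral_deriv_eq_sub
    · intro t _
      exact (hf.differentiable_iteratedDeriv m
        (by exact_mod_cast Nat.lt_succ_self m)).differentiableAt
    · rw [← iteratedDeriv_succ]
      exact hgc.intervalIntegrable c x
  -- integral tendsto
  have hI : Tendsto (fun α : ℝ => ∫ t in c..x, g t / |x - t| ^ (α - ((m:ℝ)+1) + 1))
      (nhdsWithin (((m:ℝ)+1) - 1) (Set.Ioi (((m:ℝ)+1) - 1)))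
      (nhds (∫ t in c..x, g t)) := by
    have hmap : Tendsto (fun α : ℝ => α - ((m:ℝ)+1) + 1) (nhdsWithin (((m:ℝ)+1) - 1)
        (Set.Ioi (((m:ℝ)+1) - 1))) (nhdsWithin 0 (Set.Ioi 0)) := by
      apply tendsto_nhdsWithin_of_tendsto_nhds_of_eventually_within
      · have h0 : Tendsto (fun α : ℝ => α - ((m:ℝ)+1) + 1) (nhds (((m:ℝ)+1) - 1))
            (nhds 0) := by
          have hc : Continuous (fun α : ℝ => α - ((m:ℝ)+1) + 1) := by continuity
          simpa using hc.tendsto (((m:ℝ)+1)-1)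
        exact h0.mono_left nhdsWithin_le_nhds
      · filter_upwards [self_mem_nhdsWithin] with α hα
        simp only [Set.mem_Ioi] at hα ⊢
        linarith
    simpa only [Function.comp_def] using (aux_key0 g hgc x c).comp hmap
  -- Gamma factor
  have hΓ : Tendsto (fun α : ℝ => Real.Gamma (((m:ℝ)+1) - α))
      (nhdsWithin (((m:ℝ)+1) - 1) (Set.Ioi (((m:ℝ)+1) - 1))) (nhds 1) := by
    have hct : ContinuousAt Real.Gamma 1 :=
      (Real.differentiableAt_Gamma (fun k => by
        have h2 : (0:ℝ) ≤ (k:ℝ) := Nat.cast_nonneg k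
        intro h; linarith)).continuousAt
    have hmap : Tendsto (fun α : ℝ => ((m:ℝ)+1) - α) (nhds (((m:ℝ)+1) - 1)) (nhds 1) := by
      have hc : Continuous (fun α : ℝ => ((m:ℝ)+1) - α) := by continuity
      have := hc.tendsto (((m:ℝ)+1)-1)
      norm_num at this
      convert this using 2
      ring
    have := (Real.Gamma_one ▸ hct.tendsto).comp hmap
    exact this.mono_left nhdsWithin_le_nhds
  have hfrac : Tendsto (fun α : ℝ =>
      (Real.sign (x - c)) ^ (m + 1 - 1) / Real.Gamma (((m:ℝ)+1) - α))
      (nhdsWithin (((m:ℝ)+1) - 1) (Set.Ioi (((m:ℝ)+1) - 1)))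
      (nhds ((Real.sign (x - c)) ^ (m + 1 - 1))) := by
    have := (tendsto_const_nhds (x := (Real.sign (x - c)) ^ (m + 1 - 1))).div hΓ one_ne_zero
    rwa [div_one] at this
  have := hfrac.mul hI
  rw [hFTC] at this
  convert this using 2 <;> push_cast <;> ring_nf
end

section
/- Let f : ℝ → ℝ be continuously differentiable, let α ∈ (0,1), and let x, c ∈ ℝ with x ≠ c. Define ζ_x(t) = f(t) − f(x) − f′(x)(t−x). Then D^α_c f(x) − f′(x)(x−c)/(Γ(2−α)·|x−c|^α) = −ζ_x(c)/(Γ(1−α)·|x−c|^α) − (α·sgn(x−c)/Γ(1−α)) · ∫_c^x ζ_x(t)/|x−t|^{α+1} dt. -/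
open MeasureTheory Set Filter intervalIntegral

/-- The Caputo fractional derivative of order `α ∈ (0,1)` with terminal `c`. -/
noncomputable def caputo (α c : ℝ) (f : ℝ → ℝ) (x : ℝ) : ℝ :=
  (1 / Real.Gamma (1 - α)) * ∫ t in c..x, deriv f t / |x - t| ^ α

private lemma abs_rpow_II {r : ℝ} (hr : -1 < r) (a b : ℝ) :
    IntervalIntegrable (fun u : ℝ => |u| ^ r) MeasureTheory.volume a b := by
  have h : ∀ y : ℝ, 0 ≤ y →
      IntervalIntegrable (fun u : ℝ => |u| ^ r) MeasureTheory.volume 0 y := by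
    intro y hy
    have h0 := intervalIntegrable_rpow' (a := (0:ℝ)) (b := y) hr
    rw [intervalIntegrable_iff, uIoc_of_le hy] at h0 ⊢
    exact h0.congr_fun (fun u hu => by rw [abs_of_pos hu.1]) measurableSet_Ioc
  have h' : ∀ y : ℝ, IntervalIntegrable (fun u : ℝ => |u| ^ r) MeasureTheory.volume 0 y := by
    intro y
    rcases le_total 0 y with hy | hy
    · exact h y hy
    · have := (IntervalIntegrable.iff_comp_neg (by simp)).mp (h (-y) (by linarith))
      simpa using this
  exact (h' a).symm.trans (h' b)

private lemma abs_rpow_integral {α : ℝ} (hα0 : 0 < α) (hα1 : α < 1) {y : ℝ} (hy : y ≠ 0) :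
    ∫ u in (0:ℝ)..y, |u| ^ (-α) = Real.sign y * |y| ^ (1 - α) / (1 - α) := by
  have key : ∀ z : ℝ, 0 ≤ z → ∫ u in (0:ℝ)..z, |u| ^ (-α) = z ^ (1 - α) / (1 - α) := by
    intro z hz
    have hcg : EqOn (fun u : ℝ => |u| ^ (-α)) (fun u : ℝ => u ^ (-α)) (uIcc 0 z) := by
      intro u hu
      rw [uIcc_of_le hz] at hu
      simp only
      rw [abs_of_nonneg hu.1]
    rw [intervalIntegral.integral_congr hcg,
      integral_rpow (Or.inl (by linarith : (-1:ℝ) < -α)),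
      Real.zero_rpow (by intro hcon; linarith : -α + 1 ≠ 0)]
    rw [show -α + 1 = 1 - α by ring]
    ring
  rcases hy.lt_or_gt with hy' | hy'
  · have h13 : (∫ u in (0:ℝ)..y, |u| ^ (-α)) = ∫ u in (0:ℝ)..y, |(-u)| ^ (-α) := by
      apply intervalIntegral.integral_congr
      intro u _
      simp only [abs_neg]
    have h12 := intervalIntegral.integral_comp_neg (a := (0:ℝ)) (b := y)
      (fun u : ℝ => |u| ^ (-α))
    rw [h13, h12, neg_zero, intervalIntegral.integral_symm, key (-y) (by linarith),
      Real.sign_of_neg hy', abs_of_neg hy']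
    ring
  · rw [key y hy'.le, Real.sign_of_pos hy', abs_of_pos hy']
    ring

/-- relation between the Caputo derivative and the first derivative. -/
theorem caputo_sub_firstDeriv_eq (f : ℝ → ℝ) (hf : ContDiff ℝ 1 f) (α : ℝ)
    (hα : α ∈ Set.Ioo (0 : ℝ) 1) (x c : ℝ) (hxc : x ≠ c) :
    caputo α c f x - deriv f x * (x - c) / (Real.Gamma (2 - α) * |x - c| ^ α) =
      -((f c - f x - deriv f x * (c - x)) / (Real.Gamma (1 - α) * |x - c| ^ α)) -
        (α * Real.sign (x - c) / Real.Gamma (1 - α)) *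
          ∫ t in c..x, (f t - f x - deriv f x * (t - x)) / |x - t| ^ (α + 1) := by
  obtain ⟨hα0, hα1⟩ := hα
  have hxc' : x - c ≠ 0 := sub_ne_zero.mpr hxc
  have h1α : (1:ℝ) - α ≠ 0 := by intro hcon; linarith
  have hΓpos : 0 < Real.Gamma (1 - α) := Real.Gamma_pos_of_pos (by linarith)
  have hΓ : Real.Gamma (1 - α) ≠ 0 := hΓpos.ne'
  have hΓ2 : Real.Gamma (2 - α) = (1 - α) * Real.Gamma (1 - α) := by
    rw [show (2:ℝ) - α = (1 - α) + 1 by ring, Real.Gamma_add_one h1α]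
  have hfd : Differentiable ℝ f := hf.differentiable one_ne_zero
  have hf'c : Continuous (deriv f) := hf.continuous_deriv le_rfl
  unfold caputo
  set f' : ℝ → ℝ := deriv f with hf'def
  set ζ : ℝ → ℝ := fun t => f t - f x - f' x * (t - x) with hζdef
  have hζd : ∀ t, HasDerivAt ζ (f' t - f' x) t := by
    intro t
    have h1 : HasDerivAt f (f' t) t := (hfd t).hasDerivAt
    have h2 : HasDerivAt (fun t : ℝ => f x + f' x * (t - x)) (f' x) t := by
      simpa using (((hasDerivAt_id t).sub_const x).const_mul (f' x)).const_add (f x)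
    have h3 := h1.sub h2
    simp only [hζdef, sub_sub]
    exact h3
  have hζc : Continuous ζ :=
    (hf.continuous.sub continuous_const).sub
      (continuous_const.mul (continuous_id.sub continuous_const))
  have hζx : ζ x = 0 := by simp [hζdef]
  set s : ℝ := Real.sign (x - c) with hsdef
  have hs_abs : s * |x - c| = x - c := by
    rcases hxc'.lt_or_gt with h | h
    · rw [hsdef, Real.sign_of_neg h, abs_of_neg h]; ring
    · rw [hsdef, Real.sign_of_pos h, abs_of_pos h]; ring
  have hsign_t : ∀ t ∈ Ioo (min c x) (max c x),
      x - t ≠ 0 ∧ (SignType.sign (x - t) : ℝ) = s := by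
    intro t ht
    rcases hxc'.lt_or_gt with h | h
    · have hxt : x < t := by
        have h1 : min c x = x := min_eq_right (by linarith)
        have := ht.1; rw [h1] at this; exact this
      refine ⟨by intro hcon; have := sub_eq_zero.mp hcon; linarith, ?_⟩
      rw [hsdef, Real.sign_of_neg h]
      simp [sign_neg (by linarith : x - t < 0)]
    · have hxt : t < x := by
        have h1 : max c x = x := max_eq_right (by linarith)
        have := ht.2; rw [h1] at this; exact this
      refine ⟨by intro hcon; have := sub_eq_zero.mp hcon; linarith, ?_⟩
      rw [hsdef, Real.sign_of_pos h]
      simp [sign_pos (by linarith : 0 < x - t)]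
  set H : ℝ → ℝ := fun t => ζ t * |x - t| ^ (-α) with hHdef
  have hHx : H x = 0 := by simp [hHdef, hζx]
  have habscont : Continuous (fun t : ℝ => |x - t|) := (continuous_const.sub continuous_id).abs
  have hHcont : Continuous H := by
    rw [continuous_iff_continuousAt]
    intro t
    rcases eq_or_ne t x with heq | htx
    · subst heq
      have hslope : Tendsto (slope ζ t) (nhdsWithin t {t}ᶜ) (nhds (0:ℝ)) := by
        have h0 := hasDerivAt_iff_tendsto_slope.mp (hζd t)
        simpa using h0
      have hpow : Tendsto (fun u : ℝ => (u - t) * |t - u| ^ (-α))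
          (nhdsWithin t {t}ᶜ) (nhds (0:ℝ)) := by
        apply squeeze_zero_norm' (a := fun u : ℝ => |t - u| ^ (1 - α))
        · filter_upwards [self_mem_nhdsWithin] with u hu
          have hut : u ≠ t := hu
          have hpos : 0 < |t - u| := abs_pos.mpr (sub_ne_zero.mpr (Ne.symm hut))
          have hnrm : ‖(u - t) * |t - u| ^ (-α)‖ = |u - t| * |t - u| ^ (-α) := by
            rw [norm_mul, Real.norm_eq_abs, Real.norm_eq_abs,
              abs_of_nonneg (Real.rpow_nonneg (abs_nonneg _) _)]
          rw [hnrm, show (1:ℝ) - α = 1 + (-α) by ring, Real.rpow_add hpos, Real.rpow_one,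
            abs_sub_comm u t]
        · have hb : Tendsto (fun u : ℝ => |t - u|) (nhds t) (nhds 0) := by
            have h2 : Continuous (fun u : ℝ => |t - u|) :=
              (continuous_const.sub continuous_id).abs
            simpa using h2.tendsto t
          have hc := (Real.continuousAt_rpow_const 0 (1 - α) (Or.inr (by linarith))).tendsto
          have h3 := hc.comp hb
          have h4 : (0:ℝ) ^ (1 - α) = 0 := Real.zero_rpow h1α
          rw [h4] at h3
          exact h3.mono_left nhdsWithin_le_nhds
      have hmain : Tendsto H (nhdsWithin t {t}ᶜ) (nhds (0:ℝ)) := by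
        have h5 := hslope.mul hpow
        rw [mul_zero] at h5
        apply h5.congr'
        filter_upwards [self_mem_nhdsWithin] with u hu
        have hut : u - t ≠ 0 := sub_ne_zero.mpr hu
        rw [slope_def_field, hζx, sub_zero, hHdef]
        simp only
        field_simp
      have : Tendsto H (nhds t) (nhds (H t)) := by
        rw [hHx, ← nhdsNE_sup_pure t, tendsto_sup]
        refine ⟨hmain, ?_⟩
        rw [← hHx]
        exact tendsto_pure_nhds H t
      exact this
    · have hpos : |x - t| ≠ 0 := abs_ne_zero.mpr (sub_ne_zero.mpr (Ne.symm htx))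
      exact hζc.continuousAt.mul
        ((habscont.continuousAt).rpow_const (Or.inl hpos))
  set h2 : ℝ → ℝ := fun t => ζ t * |x - t| ^ (-(α + 1)) with hh2def
  have hHderiv : ∀ t ∈ Ioo (min c x) (max c x),
      HasDerivAt H ((f' t - f' x) * |x - t| ^ (-α) + (α * s) * h2 t) t := by
    intro t ht
    obtain ⟨htx, hsgn⟩ := hsign_t t ht
    have habs : HasDerivAt (fun t : ℝ => |x - t|) (-s) t := by
      have hu : HasDerivAt (fun t : ℝ => x - t) (-1) t := by
        simpa using (hasDerivAt_id t).const_sub x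
      have h6 := (hasDerivAt_abs htx).comp t hu
      have h7 : (SignType.sign (x - t) : ℝ) * (-1) = -s := by rw [hsgn]; ring
      rw [h7] at h6
      exact h6
    have hpow : HasDerivAt (fun t : ℝ => |x - t| ^ (-α))
        ((-s) * (-α) * |x - t| ^ (-α - 1)) t :=
      habs.rpow_const (p := -α) (Or.inl (abs_ne_zero.mpr htx))
    have h8 : HasDerivAt H ((f' t - f' x) * |x - t| ^ (-α) + ζ t * (-s * -α * |x - t| ^ (-α - 1))) t :=
      (hζd t).mul hpow
    convert h8 using 1
    rw [hh2def]
    simp only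
    rw [show -(α + 1) = -α - 1 by ring]
    ring
  have hI0 : IntervalIntegrable (fun t : ℝ => |x - t| ^ (-α)) MeasureTheory.volume c x := by
    have h9 := (abs_rpow_II (by linarith : (-1:ℝ) < -α) (x - c) (x - x)).comp_sub_left x
    simpa using h9
  have hI1 : IntervalIntegrable (fun t : ℝ => (f' t - f' x) * |x - t| ^ (-α))
      MeasureTheory.volume c x :=
    hI0.continuousOn_mul ((hf'c.sub continuous_const).continuousOn)
  obtain ⟨M, hM⟩ : ∃ M, ∀ u ∈ uIcc c x, ‖f' u - f' x‖ ≤ M :=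
    isCompact_uIcc.exists_bound_of_continuousOn ((hf'c.sub continuous_const).continuousOn)
  have hζbound : ∀ t ∈ uIcc c x, |ζ t| ≤ M * |t - x| := by
    intro t ht
    have hxmem : x ∈ uIcc c x := right_mem_uIcc
    have hsub : uIcc x t ⊆ uIcc c x := uIcc_subset_uIcc hxmem ht
    have hFTC : ∫ u in x..t, (f' u - f' x) = ζ t - ζ x :=
      intervalIntegral.integral_eq_sub_of_hasDerivAt (fun u _ => hζd u)
        ((hf'c.sub continuous_const).intervalIntegrable x t)
    rw [hζx, sub_zero] at hFTC
    rw [← hFTC]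
    have h10 := intervalIntegral.norm_integral_le_of_norm_le_const
      (f := fun u => f' u - f' x) (a := x) (b := t) (C := M)
      (fun u hu => hM u (hsub (uIoc_subset_uIcc hu)))
    calc |∫ u in x..t, (f' u - f' x)| = ‖∫ u in x..t, (f' u - f' x)‖ := (Real.norm_eq_abs _).symm
      _ ≤ M * |t - x| := h10
  have hI2 : IntervalIntegrable h2 MeasureTheory.volume c x := by
    apply IntervalIntegrable.mono_fun' (g := fun t => M * |x - t| ^ (-α)) (hI0.const_mul M)
    · apply Measurable.aestronglyMeasurable
      apply measurable_of_continuousOn_compl_singleton x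
      intro t ht
      have htx : t ≠ x := ht
      have hpos : |x - t| ≠ 0 := abs_ne_zero.mpr (sub_ne_zero.mpr (Ne.symm htx))
      exact (hζc.continuousAt.mul
        ((habscont.continuousAt).rpow_const (Or.inl hpos))).continuousWithinAt
    · filter_upwards [ae_restrict_mem measurableSet_uIoc] with t ht
      have htIcc : t ∈ uIcc c x := uIoc_subset_uIcc ht
      rcases eq_or_ne t x with heq | htx
      · subst heq
        have hMnn : 0 ≤ M := le_trans (norm_nonneg _) (hM t right_mem_uIcc)
        simp only [hh2def, hζx, zero_mul, norm_zero]
        exact mul_nonneg hMnn (Real.rpow_nonneg (abs_nonneg _) _)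
      · have hpos : 0 < |x - t| := abs_pos.mpr (sub_ne_zero.mpr (Ne.symm htx))
        have hn1 : ‖h2 t‖ = |ζ t| * |x - t| ^ (-(α + 1)) := by
          rw [hh2def]
          simp only [Real.norm_eq_abs, abs_mul,
            abs_of_nonneg (Real.rpow_nonneg (abs_nonneg (x - t)) _)]
        rw [hn1]
        calc |ζ t| * |x - t| ^ (-(α + 1))
            ≤ (M * |t - x|) * |x - t| ^ (-(α + 1)) :=
              mul_le_mul_of_nonneg_right (hζbound t htIcc)
                (Real.rpow_nonneg (abs_nonneg _) _)
          _ = M * |x - t| ^ (-α) := by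
              rw [abs_sub_comm t x, show (-α) = 1 + (-(α+1)) by ring,
                Real.rpow_add hpos, Real.rpow_one]
              ring
  set J : ℝ := ∫ t in c..x, h2 t with hJdef
  have hFTC2 : ∫ t in c..x, ((f' t - f' x) * |x - t| ^ (-α) + (α * s) * h2 t)
      = H x - H c :=
    intervalIntegral.integral_eq_sub_of_hasDeriv_right hHcont.continuousOn
      (fun t ht => (hHderiv t ht).hasDerivWithinAt) (hI1.add (hI2.const_mul (α * s)))
  have hmain1 : (∫ t in c..x, (f' t - f' x) * |x - t| ^ (-α))
      = -(ζ c * |x - c| ^ (-α)) - (α * s) * J := by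
    have hsplit : ∫ t in c..x, ((f' t - f' x) * |x - t| ^ (-α) + (α * s) * h2 t)
        = (∫ t in c..x, (f' t - f' x) * |x - t| ^ (-α)) + (α * s) * J := by
      rw [intervalIntegral.integral_add hI1 (hI2.const_mul (α * s)),
        intervalIntegral.integral_const_mul, hJdef]
    have hHc : H c = ζ c * |x - c| ^ (-α) := rfl
    rw [hsplit, hHx, hHc, zero_sub] at hFTC2
    linarith
  have hI0val : (∫ t in c..x, |x - t| ^ (-α)) = s * |x - c| ^ (1 - α) / (1 - α) := by
    have h11 := intervalIntegral.integral_comp_sub_left (a := c) (b := x)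
      (fun u : ℝ => |u| ^ (-α)) x
    simp only [sub_self] at h11
    rw [h11]
    exact abs_rpow_integral hα0 hα1 hxc'
  have hcap : (∫ t in c..x, f' t / |x - t| ^ α)
      = (∫ t in c..x, ((f' t - f' x) * |x - t| ^ (-α) + f' x * |x - t| ^ (-α))) := by
    apply intervalIntegral.integral_congr
    intro t _
    simp only
    rw [Real.rpow_neg (abs_nonneg _), div_eq_mul_inv]
    ring
  have htgt : (∫ t in c..x, (f t - f x - f' x * (t - x)) / |x - t| ^ (α + 1)) = J := by
    rw [hJdef]
    apply intervalIntegral.integral_congr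
    intro t _
    rw [hh2def]
    simp only [hζdef]
    rw [Real.rpow_neg (abs_nonneg _), div_eq_mul_inv]
  rw [htgt, hcap, intervalIntegral.integral_add hI1 (hI0.const_mul (f' x)),
    intervalIntegral.integral_const_mul, hmain1, hI0val, hΓ2]
  have habs_pos : 0 < |x - c| := abs_pos.mpr hxc'
  have hPpos : (0:ℝ) < |x - c| ^ α := Real.rpow_pos_of_pos habs_pos α
  have hpow2 : |x - c| ^ (-α) = (|x - c| ^ α)⁻¹ := Real.rpow_neg (abs_nonneg _) α
  have hpow3 : s * |x - c| ^ (1 - α) = (x - c) * (|x - c| ^ α)⁻¹ := by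
    rw [show (1:ℝ) - α = 1 + (-α) by ring, Real.rpow_add habs_pos, Real.rpow_one, hpow2,
      ← mul_assoc, hs_abs]
  rw [hpow2, mul_div_assoc (f' x), hpow3]
  have hζcc : f c - f x - f' x * (c - x) = ζ c := rfl
  rw [hζcc]
  field_simp
  ring
end

section
/- Let f : ℝ → ℝ be continuously differentiable and (μ,p)-uniformly convex for some μ ≥ 0, p > 0; let α ∈ (0,1) and x, c ∈ ℝ with x ≠ c. Then f′(x)(x−c)/(Γ(2−α)·|x−c|^α) − D^α_c f(x) ≥ (μ/(Γ(1−α)·(1+p−α))) · |x−c|^{1+p−α}. -/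
/-- `f : ℝ → ℝ` is `(μ,p)`-uniformly convex. -/
def UniformlyConvex (μ p : ℝ) (f : ℝ → ℝ) : Prop :=
  ∀ x y : ℝ, μ / (1 + p) * |y - x| ^ (1 + p) ≤ f y - f x - deriv f x * (y - x)

open MeasureTheory intervalIntegral Real Set Filter
open scoped Topology

/-- Core integral inequality for `c < x`. -/
lemma caputo_key_aux (f : ℝ → ℝ) (hf : ContDiff ℝ 1 f)
    (μ p : ℝ) (hμ : 0 ≤ μ) (hp : 0 < p) (hconv : UniformlyConvex μ p f)
    (α : ℝ) (hα : α ∈ Set.Ioo (0 : ℝ) 1) (x c : ℝ) (hcx : c < x) :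
    μ * (x - c) ^ (1 + p - α) / (1 + p - α) ≤
      ∫ t in c..x, (deriv f x - deriv f t) * (x - t) ^ (-α) := by
  obtain ⟨hα0, hα1⟩ := hα
  have hd : 0 < x - c := sub_pos.2 hcx
  have hq : 0 < 1 + p - α := by linarith
  have h1p : (0:ℝ) < 1 + p := by linarith
  have hf' : Continuous (deriv f) := hf.continuous_deriv le_rfl
  have hfd : Differentiable ℝ f := hf.differentiable one_ne_zero
  set g : ℝ → ℝ := fun s => (deriv f x - deriv f s) * (x - s) ^ (-α) with hg
  set u : ℝ → ℝ := fun s => f s - f x - deriv f x * (s - x) with hu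
  have hulb : ∀ s, μ / (1 + p) * |s - x| ^ (1 + p) ≤ u s := fun s => hconv x s
  set K : ℝ := α * μ / ((1 + p) * (1 + p - α)) with hK
  -- integrability of g on c..x
  have h1 : IntervalIntegrable (fun s : ℝ => (x - s) ^ (-α)) volume c x := by
    have := (intervalIntegral.intervalIntegrable_rpow' (a := x - c) (b := x - x)
      (r := -α) (by linarith)).comp_sub_left x
    simpa using this
  have hint : IntervalIntegrable g volume c x :=
    h1.continuousOn_mul ((continuous_const.sub hf').continuousOn)
  set P : ℝ → ℝ := fun y => ∫ t in c..y, g t with hP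
  -- derivative of primitive
  have hgcont : ∀ y ∈ Iio x, ContinuousAt g y := by
    intro y hy
    have hne : x - y ≠ 0 := sub_ne_zero.2 (ne_of_gt hy)
    exact ((continuous_const.sub hf').continuousAt).mul
      (((Real.continuousAt_rpow_const (x - y) (-α) (Or.inl hne)).comp
        ((continuous_const.sub continuous_id).continuousAt)))
  have hPd : ∀ y ∈ Ico c x, HasDerivAt P (g y) y := by
    intro y hy
    refine intervalIntegral.integral_hasDerivAt_right (hint.mono_set ?_)
      (ContinuousAt.stronglyMeasurableAtFilter isOpen_Iio hgcont y hy.2) (hgcont y hy.2)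
    rw [Set.uIcc_of_le hy.1, Set.uIcc_of_le hcx.le]
    exact Set.Icc_subset_Icc le_rfl hy.2.le
  set Φ : ℝ → ℝ := fun y => P y + u y * (x - y) ^ (-α) + K * (x - y) ^ (1 + p - α) with hΦ
  have hΦd : ∀ y ∈ Ico c x, HasDerivAt Φ
      (α * (x - y) ^ (-α - 1) * (u y - μ / (1 + p) * (x - y) ^ (1 + p))) y := by
    intro y hy
    have hxy : 0 < x - y := sub_pos.2 hy.2
    have hin : HasDerivAt (fun z : ℝ => x - z) (-1) y := (hasDerivAt_id y).const_sub x
    have hr1 : HasDerivAt (fun z : ℝ => (x - z) ^ (-α))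
        (-α * (x - y) ^ (-α - 1) * -1) y :=
      (Real.hasDerivAt_rpow_const (Or.inl hxy.ne')).comp y hin
    have hr2 : HasDerivAt (fun z : ℝ => (x - z) ^ (1 + p - α))
        ((1 + p - α) * (x - y) ^ (1 + p - α - 1) * -1) y :=
      (Real.hasDerivAt_rpow_const (Or.inl hxy.ne')).comp y hin
    have hu1 : HasDerivAt u (deriv f y - deriv f x) y := by
      have h3 : HasDerivAt (fun s : ℝ => deriv f x * (s - x)) (deriv f x * 1) y :=
        ((hasDerivAt_id y).sub_const x).const_mul (deriv f x)
      have h4 := (((hfd y).hasDerivAt).sub_const (f x)).sub h3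
      rw [mul_one] at h4
      exact h4
    have hcomb := ((hPd y hy).add (hu1.mul hr1)).add (hr2.const_mul K)
    refine hcomb.congr_deriv ?_
    have e1 : (x - y) ^ (-α - 1) * (x - y) ^ (1 + p) = (x - y) ^ (p - α) := by
      rw [← Real.rpow_add hxy]; ring_nf
    have e2 : (x - y) ^ (1 + p - α - 1) = (x - y) ^ (p - α) := by ring_nf
    have hKe : K * (1 + p - α) = α * μ / (1 + p) := by
      rw [hK]; field_simp
    simp only [hg, e2]
    have : α * (x - y) ^ (-α - 1) * (u y - μ / (1 + p) * (x - y) ^ (1 + p))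
        = α * (x - y) ^ (-α - 1) * u y
          - (α * μ / (1 + p)) * ((x - y) ^ (-α - 1) * (x - y) ^ (1 + p)) := by ring
    rw [this, e1, ← hKe]
    ring
  have hΦnn : ∀ y ∈ Ico c x,
      0 ≤ α * (x - y) ^ (-α - 1) * (u y - μ / (1 + p) * (x - y) ^ (1 + p)) := by
    intro y hy
    have hxy : 0 < x - y := sub_pos.2 hy.2
    have h2 := hulb y
    rw [show |y - x| = x - y by rw [abs_sub_comm]; exact abs_of_pos hxy] at h2
    have : 0 ≤ u y - μ / (1 + p) * (x - y) ^ (1 + p) := by linarith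
    positivity
  -- monotonicity of Φ on [c, x)
  have hmono : ∀ y ∈ Ico c x, Φ c ≤ Φ y := by
    intro y hy
    rcases eq_or_lt_of_le hy.1 with h | h
    · rw [← h]
    · have hsub : Icc c y ⊆ Ico c x := fun t ht => ⟨ht.1, lt_of_le_of_lt ht.2 hy.2⟩
      have hm := monotoneOn_of_deriv_nonneg (convex_Icc c y)
        (fun t ht => (hΦd t (hsub ht)).continuousAt.continuousWithinAt)
        (fun t ht => by
          rw [interior_Icc] at ht
          exact (hΦd t (hsub (Ioo_subset_Icc_self ht))).differentiableAt.differentiableWithinAt)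
        (fun t ht => by
          rw [interior_Icc] at ht
          rw [(hΦd t (hsub (Ioo_subset_Icc_self ht))).deriv]
          exact hΦnn t (hsub (Ioo_subset_Icc_self ht)))
      exact hm (Set.left_mem_Icc.2 h.le) (Set.right_mem_Icc.2 h.le) h.le
  -- limits as y → x⁻
  have hIoo : 𝓝[Set.Ioo c x] x = 𝓝[<] x := nhdsWithin_Ioo_eq_nhdsLT hcx
  have hPlim : Tendsto P (𝓝[<] x) (𝓝 (P x)) := by
    have hPc : ContinuousOn P (Set.uIcc c x) :=
      intervalIntegral.continuousOn_primitive_interval' hint Set.left_mem_uIcc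
    have h7 : ContinuousWithinAt P (Set.Ioo c x) x :=
      (hPc x Set.right_mem_uIcc).mono
        (by rw [Set.uIcc_of_le hcx.le]; exact Set.Ioo_subset_Icc_self)
    have h8 : Tendsto P (𝓝[Set.Ioo c x] x) (𝓝 (P x)) := h7
    rwa [hIoo] at h8
  have hxlim : Tendsto (fun y : ℝ => x - y) (𝓝[<] x) (𝓝 0) := by
    have h9 : Tendsto (fun y : ℝ => x - y) (𝓝 x) (𝓝 (x - x)) :=
      (continuous_const.sub continuous_id).tendsto x
    have := h9.mono_left (nhdsWithin_le_nhds (s := Iio x))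
    simpa using this
  have hrpow_lim : ∀ β : ℝ, 0 < β →
      Tendsto (fun y : ℝ => (x - y) ^ β) (𝓝[<] x) (𝓝 0) := by
    intro β hβ
    have hc : ContinuousAt (fun t : ℝ => t ^ β) 0 :=
      Real.continuousAt_rpow_const 0 β (Or.inr hβ.le)
    have := (hc.tendsto.comp hxlim)
    simpa [Real.zero_rpow hβ.ne', Function.comp_def] using this
  have huylim : Tendsto (fun y => u y * (x - y) ^ (-α)) (𝓝[<] x) (𝓝 0) := by
    have hslope : Tendsto (fun y => slope f x y - deriv f x) (𝓝[<] x) (𝓝 0) := by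
      have h1 := (hasDerivAt_iff_tendsto_slope.1 (hfd x).hasDerivAt).mono_left
        (nhdsWithin_mono x (fun y (hy : y ∈ Iio x) => ne_of_lt hy))
      simpa using h1.sub_const (deriv f x)
    have hpw := hrpow_lim (1 - α) (by linarith)
    have hmul := hslope.mul hpw
    rw [mul_zero] at hmul
    have hmn : Tendsto (fun y => -((slope f x y - deriv f x) * (x - y) ^ (1 - α)))
        (𝓝[<] x) (𝓝 0) := by simpa using hmul.neg
    have heq : ∀ᶠ y in 𝓝[<] x, -((slope f x y - deriv f x) * (x - y) ^ (1 - α))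
        = u y * (x - y) ^ (-α) := by
      filter_upwards [self_mem_nhdsWithin] with y hy
      have hxy : 0 < x - y := sub_pos.2 hy
      have hyx : (y : ℝ) - x ≠ 0 := sub_ne_zero.2 (ne_of_lt hy)
      have e : (x - y) ^ (1 - α) = (x - y) * (x - y) ^ (-α) := by
        rw [show (1:ℝ) - α = 1 + -α by ring, Real.rpow_add hxy, Real.rpow_one]
      rw [e, slope_def_field, hu]
      field_simp
      ring
    exact Tendsto.congr' heq hmn
  have hKlim : Tendsto (fun y => K * (x - y) ^ (1 + p - α)) (𝓝[<] x) (𝓝 0) := by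
    simpa using ((hrpow_lim (1 + p - α) hq).const_mul K)
  have hΦlim : Tendsto Φ (𝓝[<] x) (𝓝 (P x)) := by
    have h6 := (hPlim.add huylim).add hKlim
    simpa using h6
  have hev : ∀ᶠ y in 𝓝[<] x, Φ c ≤ Φ y := by
    rw [← hIoo]
    filter_upwards [self_mem_nhdsWithin] with y hy
    exact hmono y (Set.Ioo_subset_Ico_self hy)
  have hfin : Φ c ≤ P x := ge_of_tendsto hΦlim hev
  have hPc0 : P c = 0 := intervalIntegral.integral_same
  have huc : μ / (1 + p) * (x - c) ^ (1 + p) ≤ u c := by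
    have h2 := hulb c
    rwa [show |c - x| = x - c by rw [abs_sub_comm]; exact abs_of_pos hd] at h2
  have hpowc : (0:ℝ) < (x - c) ^ (-α) := Real.rpow_pos_of_pos hd _
  have e3 : (x - c) ^ (1 + p) * (x - c) ^ (-α) = (x - c) ^ (1 + p - α) := by
    rw [← Real.rpow_add hd]; ring_nf
  have hco : μ / (1 + p) + K = μ / (1 + p - α) := by
    rw [hK]; field_simp; ring
  have hlow : μ * (x - c) ^ (1 + p - α) / (1 + p - α) ≤ Φ c := by
    have h4 : μ / (1 + p) * (x - c) ^ (1 + p) * (x - c) ^ (-α) ≤ u c * (x - c) ^ (-α) :=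
      mul_le_mul_of_nonneg_right huc hpowc.le
    rw [mul_assoc, e3] at h4
    have h5 : μ * (x - c) ^ (1 + p - α) / (1 + p - α)
        = μ / (1 + p) * (x - c) ^ (1 + p - α) + K * (x - c) ^ (1 + p - α) := by
      rw [← add_mul, hco]; ring
    simp only [hΦ, hPc0, zero_add]
    linarith
  have hPxe : intervalIntegral g c x volume = P x := rfl
  rw [hPxe]
  exact hlow.trans hfin

/-- Main inequality in the case `c < x`. -/
lemma main_gt_aux (f : ℝ → ℝ) (hf : ContDiff ℝ 1 f)
    (μ p : ℝ) (hμ : 0 ≤ μ) (hp : 0 < p) (hconv : UniformlyConvex μ p f)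
    (α : ℝ) (hα : α ∈ Set.Ioo (0 : ℝ) 1) (x c : ℝ) (hcx : c < x) :
    μ / (Real.Gamma (1 - α) * (1 + p - α)) * |x - c| ^ (1 + p - α) ≤
      deriv f x * (x - c) / (Real.Gamma (2 - α) * |x - c| ^ α) - caputo α c f x := by
  obtain ⟨hα0, hα1⟩ := hα
  have hd : 0 < x - c := sub_pos.2 hcx
  have habs : |x - c| = x - c := abs_of_pos hd
  have hq : 0 < 1 + p - α := by linarith
  have h1α : (0:ℝ) < 1 - α := by linarith
  have hΓ : 0 < Real.Gamma (1 - α) := Real.Gamma_pos_of_pos h1α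
  have hΓ2 : Real.Gamma (2 - α) = (1 - α) * Real.Gamma (1 - α) := by
    rw [show (2:ℝ) - α = (1 - α) + 1 by ring, Real.Gamma_add_one h1α.ne']
  have hf' : Continuous (deriv f) := hf.continuous_deriv le_rfl
  have h1 : IntervalIntegrable (fun s : ℝ => (x - s) ^ (-α)) volume c x := by
    have := (intervalIntegral.intervalIntegrable_rpow' (a := x - c) (b := x - x)
      (r := -α) (by linarith)).comp_sub_left x
    simpa using this
  have hintf : IntervalIntegrable (fun t : ℝ => deriv f t * (x - t) ^ (-α)) volume c x :=
    h1.continuousOn_mul hf'.continuousOn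
  have hintc : IntervalIntegrable (fun t : ℝ => deriv f x * (x - t) ^ (-α)) volume c x :=
    h1.continuousOn_mul continuousOn_const
  -- rewrite caputo integrand
  have hcap : (∫ t in c..x, deriv f t / |x - t| ^ α)
      = ∫ t in c..x, deriv f t * (x - t) ^ (-α) := by
    apply intervalIntegral.integral_congr
    intro t ht
    rw [Set.uIcc_of_le hcx.le] at ht
    have hnn : 0 ≤ x - t := sub_nonneg.2 ht.2
    show deriv f t / |x - t| ^ α = deriv f t * (x - t) ^ (-α)
    rw [abs_of_nonneg hnn, Real.rpow_neg hnn, div_eq_mul_inv]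
  -- split the key integral
  have hsplit : (∫ t in c..x, (deriv f x - deriv f t) * (x - t) ^ (-α))
      = (∫ t in c..x, deriv f x * (x - t) ^ (-α))
        - ∫ t in c..x, deriv f t * (x - t) ^ (-α) := by
    rw [← intervalIntegral.integral_sub hintc hintf]
    congr 1
    ext t
    ring
  have hconst : (∫ t in c..x, (x - t) ^ (-α)) = (x - c) ^ (1 - α) / (1 - α) := by
    have h2 := intervalIntegral.integral_comp_sub_left (fun s : ℝ => s ^ (-α)) x
      (a := c) (b := x)
    rw [h2, sub_self]
    rw [integral_rpow (Or.inl (by linarith : (-1:ℝ) < -α))]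
    rw [Real.zero_rpow (by linarith : -α + 1 ≠ 0)]
    rw [show -α + 1 = 1 - α by ring]
    ring
  have hconst2 : (∫ t in c..x, deriv f x * (x - t) ^ (-α))
      = deriv f x * ((x - c) ^ (1 - α) / (1 - α)) := by
    rw [intervalIntegral.integral_const_mul, hconst]
  have hkey := caputo_key_aux f hf μ p hμ hp hconv α ⟨hα0, hα1⟩ x c hcx
  rw [hsplit, hconst2] at hkey
  set A := ∫ t in c..x, deriv f t * (x - t) ^ (-α) with hA
  -- final algebra
  rw [caputo, hcap, habs, hΓ2]
  have hda : (0:ℝ) < (x - c) ^ α := Real.rpow_pos_of_pos hd α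
  have hdd : (x - c) ^ (1 - α) = (x - c) / (x - c) ^ α := by
    rw [Real.rpow_sub hd, Real.rpow_one]
  have erhs : deriv f x * (x - c) / ((1 - α) * Real.Gamma (1 - α) * (x - c) ^ α)
      - 1 / Real.Gamma (1 - α) * A
      = (deriv f x * ((x - c) ^ (1 - α) / (1 - α)) - A) / Real.Gamma (1 - α) := by
    rw [hdd]
    field_simp
  rw [erhs]
  have elhs : μ / (Real.Gamma (1 - α) * (1 + p - α)) * (x - c) ^ (1 + p - α)
      = (μ * (x - c) ^ (1 + p - α) / (1 + p - α)) / Real.Gamma (1 - α) := by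
    rw [div_mul_eq_mul_div, div_div, mul_comm (Real.Gamma (1 - α))]
  rw [elhs]
  gcongr

/-- for `(μ,p)`-uniformly convex `f`, the gap between the first-derivative
expression and the Caputo derivative is bounded below. -/
theorem firstDeriv_sub_caputo_ge_of_uniformlyConvex (f : ℝ → ℝ) (hf : ContDiff ℝ 1 f)
    (μ p : ℝ) (hμ : 0 ≤ μ) (hp : 0 < p) (hconv : UniformlyConvex μ p f)
    (α : ℝ) (hα : α ∈ Set.Ioo (0 : ℝ) 1) (x c : ℝ) (hxc : x ≠ c) :
    μ / (Real.Gamma (1 - α) * (1 + p - α)) * |x - c| ^ (1 + p - α) ≤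
      deriv f x * (x - c) / (Real.Gamma (2 - α) * |x - c| ^ α) - caputo α c f x := by
  rcases hxc.lt_or_gt with h | h
  · -- x < c : reduce to the reflected function
    set g : ℝ → ℝ := fun t => f (-t) with hgdef
    have hg : ContDiff ℝ 1 g := hf.comp contDiff_neg
    have hgd : ∀ t, deriv g t = -deriv f (-t) := fun t => deriv_comp_neg f t
    have hgconv : UniformlyConvex μ p g := by
      intro a b
      have h2 := hconv (-a) (-b)
      have e1 : |(-b) - (-a)| = |b - a| := by
        rw [show (-b) - (-a) = -(b - a) by ring, abs_neg]
      rw [e1] at h2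
      have e2 : g b - g a - deriv g a * (b - a)
          = f (-b) - f (-a) - deriv f (-a) * ((-b) - (-a)) := by
        rw [hgd]; simp only [hgdef]; ring
      rw [e2]
      exact h2
    have key := main_gt_aux g hg μ p hμ hp hgconv α hα (-x) (-c) (neg_lt_neg h)
    have hc1 : caputo α (-c) g (-x) = caputo α c f x := by
      rw [caputo, caputo]
      congr 1
      have e3 : ∀ t : ℝ, deriv g t / |(-x) - t| ^ α
          = (fun s => -(deriv f s / |x - s| ^ α)) (-t) := by
        intro t
        rw [hgd]
        have : |(-x) - t| = |x - (-t)| := by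
          rw [show (-x) - t = -(x - (-t)) by ring, abs_neg]
        rw [this]
        ring
      rw [intervalIntegral.integral_congr (fun t _ => e3 t)]
      rw [intervalIntegral.integral_comp_neg (fun s => -(deriv f s / |x - s| ^ α))]
      simp only [neg_neg]
      rw [intervalIntegral.integral_neg, intervalIntegral.integral_symm, neg_neg]
    have e4 : deriv g (-x) * ((-x) - (-c)) = deriv f x * (x - c) := by
      rw [hgd, neg_neg]; ring
    have e5 : |(-x) - (-c)| = |x - c| := by
      rw [show (-x) - (-c) = -(x - c) by ring, abs_neg]
    rw [hc1, e4, e5] at key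
    exact key
  · exact main_gt_aux f hf μ p hμ hp hconv α hα x c h
end

section
/- Let f : ℝ → ℝ be twice continuously differentiable, L-smooth, and μ-strongly convex with 0 ≤ μ ≤ L; let α ∈ (0,1) and β ≥ 0. Set γ = (1−α)/(2−α), K₁ = ((L+μ)/2)(β−γ), K₂ = ((L−μ)/2)(β+γ). Then for all x, c with x ≠ c: |δ^{α,β}_c f(x) − f′(x) − K₁(x−c)| ≤ K₂·|x−c|. -/
/-- The Caputo fractional derivative of order `1 + α` (for `α ∈ (0,1)`) with terminal `c`. -/
noncomputable def caputoSucc (α c : ℝ) (f : ℝ → ℝ) (x : ℝ) : ℝ :=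
  (Real.sign (x - c) / Real.Gamma (1 - α)) *
    ∫ t in c..x, deriv (deriv f) t / |x - t| ^ α

/-- The fractional gradient operator `δ^{α,β}_c f (x)`, with the convention that it is `0`
when `x = c`. -/
noncomputable def fracGrad (α β c : ℝ) (f : ℝ → ℝ) (x : ℝ) : ℝ :=
  if x = c then 0
  else (Real.Gamma (2 - α) * |x - c| ^ α / (x - c)) *
    (caputo α c f x + β * |x - c| * caputoSucc α c f x)

/-- `f : ℝ → ℝ` is `L`-smooth. -/
def RSmooth (L : ℝ) (f : ℝ → ℝ) : Prop :=
  ∀ x y : ℝ, |f y - f x - deriv f x * (y - x)| ≤ L / 2 * (y - x) ^ 2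

/-- `f : ℝ → ℝ` is `μ`-strongly convex. -/
def RStrongConvex (μ : ℝ) (f : ℝ → ℝ) : Prop :=
  ∀ x y : ℝ, μ / 2 * (y - x) ^ 2 ≤ f y - f x - deriv f x * (y - x)

open MeasureTheory Set

lemma derivDiffBound (f : ℝ → ℝ) (L μ : ℝ) (hs : ∀ x y : ℝ, |f y - f x - deriv f x * (y - x)| ≤ L / 2 * (y - x) ^ 2)
    (hc : ∀ x y : ℝ, μ / 2 * (y - x) ^ 2 ≤ f y - f x - deriv f x * (y - x))
    (x y : ℝ) : |deriv f y - deriv f x - (L + μ) / 2 * (y - x)| ≤ (L - μ) / 2 * |y - x| := by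
  rcases eq_or_ne y x with h | h
  · simp [h]
  · have h1 := abs_le.mp (hs x y)
    have h2 := abs_le.mp (hs y x)
    have h3 := hc x y
    have h4 := hc y x
    have h5 : |y - x| * |y - x| = (y - x) ^ 2 := by rw [← abs_mul, ← sq, abs_sq]
    have key : |(deriv f y - deriv f x - (L + μ) / 2 * (y - x)) * (y - x)|
        ≤ (L - μ) / 2 * |y - x| * |y - x| := by
      have h6 : (x - y) ^ 2 = (y - x) ^ 2 := by ring
      rw [abs_le, mul_assoc, h5]
      constructor <;> nlinarith [h1.1, h1.2, h2.1, h2.2, h6]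
    rw [abs_mul] at key
    exact le_of_mul_le_mul_right key (abs_pos.mpr (sub_ne_zero.mpr h))

lemma secondDerivBound (f : ℝ → ℝ) (hdf1 : Differentiable ℝ (deriv f)) (L μ : ℝ)
    (hs : ∀ x y : ℝ, |f y - f x - deriv f x * (y - x)| ≤ L / 2 * (y - x) ^ 2)
    (hc : ∀ x y : ℝ, μ / 2 * (y - x) ^ 2 ≤ f y - f x - deriv f x * (y - x))
    (x : ℝ) : |deriv (deriv f) x - (L + μ) / 2| ≤ (L - μ) / 2 := by
  have hD : HasDerivAt (deriv f) (deriv (deriv f) x) x := (hdf1 x).hasDerivAt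
  have ht := hasDerivAt_iff_tendsto_slope.mp hD
  have ht2 : Filter.Tendsto (fun y => |slope (deriv f) x y - (L + μ) / 2|) (nhdsWithin x {x}ᶜ)
      (nhds |deriv (deriv f) x - (L + μ) / 2|) := (ht.sub_const _).abs
  refine le_of_tendsto ht2 ?_
  filter_upwards [self_mem_nhdsWithin] with y hy
  have hne : y - x ≠ 0 := sub_ne_zero.mpr hy
  have hb := derivDiffBound f L μ hs hc x y
  rw [slope_def_field]
  have heq : (deriv f y - deriv f x) / (y - x) - (L + μ) / 2
      = (deriv f y - deriv f x - (L + μ) / 2 * (y - x)) / (y - x) := by field_simp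
  rw [heq, abs_div, div_le_iff₀ (abs_pos.mpr hne)]
  calc |deriv f y - deriv f x - (L + μ) / 2 * (y - x)| ≤ (L - μ) / 2 * |y - x| := hb
    _ = (L - μ) / 2 * |y - x| := rfl

lemma integrableOn_div_rpow (α : ℝ) (hα0 : 0 < α) (hα1 : α < 1) (d : ℝ)
    (G : ℝ → ℝ) (hG : Continuous G) :
    IntegrableOn (fun u => G u / u ^ α) (Set.Ioc (0:ℝ) d) := by
  rcases le_or_gt d 0 with hd | hd
  · rw [Set.Ioc_eq_empty (by exact fun h => absurd (h.trans_le hd) (lt_irrefl 0))]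
    exact integrableOn_empty
  · set Gb : ℝ → ℝ := fun u => G (min (max u 0) d) with hGb
    have hGbc : Continuous Gb :=
      hG.comp (((continuous_id.max continuous_const).min continuous_const))
    obtain ⟨C, hC⟩ := (isCompact_Icc (a := (0:ℝ)) (b := d)).exists_bound_of_continuousOn
      hG.continuousOn
    have hCb : ∀ u, ‖Gb u‖ ≤ C := by
      intro u
      exact hC _ ⟨le_min (le_max_right u 0) hd.le, min_le_right _ _⟩
    have hint : IntegrableOn (fun u : ℝ => u ^ (-α)) (Set.Ioc (0:ℝ) d) := by
      rw [← intervalIntegrable_iff_integrableOn_Ioc_of_le hd.le]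
      exact intervalIntegral.intervalIntegrable_rpow' (by linarith)
    have hmul : IntegrableOn (fun u => Gb u * u ^ (-α)) (Set.Ioc (0:ℝ) d) :=
      hint.bdd_mul hGbc.aestronglyMeasurable (ae_of_all _ hCb)
    refine hmul.congr_fun ?_ measurableSet_Ioc
    intro u hu
    have hu0 : (0:ℝ) < u := hu.1
    simp only [hGb, max_eq_left hu0.le, min_eq_left hu.2, Real.rpow_neg hu0.le,
      div_eq_mul_inv]

lemma keyIntegral (α : ℝ) (hα0 : 0 < α) (hα1 : α < 1) (d : ℝ) (hd : 0 < d)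
    (P : ℝ → ℝ) (hP : Continuous P) (a b e₀ e₁ : ℝ) (he₀ : 0 ≤ e₀) (he₁ : 0 ≤ e₁)
    (hbound : ∀ u ∈ Set.Ioc (0:ℝ) d, |P u - (a + b * u)| ≤ e₀ + e₁ * u) :
    |(∫ u in (0:ℝ)..d, P u / u ^ α) -
        (a * (d ^ (1 - α) / (1 - α)) + b * (d ^ (2 - α) / (2 - α)))| ≤
      e₀ * (d ^ (1 - α) / (1 - α)) + e₁ * (d ^ (2 - α) / (2 - α)) := by
  have h1α : (0:ℝ) < 1 - α := by linarith
  have h2α : (0:ℝ) < 2 - α := by linarith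
  have I1 : (∫ u in (0:ℝ)..d, u ^ (-α)) = d ^ (1 - α) / (1 - α) := by
    rw [integral_rpow (Or.inl (by linarith))]
    rw [show -α + 1 = 1 - α by ring, Real.zero_rpow h1α.ne']
    ring
  have I2 : (∫ u in (0:ℝ)..d, u ^ (1 - α)) = d ^ (2 - α) / (2 - α) := by
    rw [integral_rpow (Or.inl (by linarith))]
    rw [show 1 - α + 1 = 2 - α by ring, Real.zero_rpow h2α.ne']
    ring
  set Q : ℝ → ℝ := fun u => P u - (a + b * u) with hQdef
  have hQc : Continuous Q := hP.sub (continuous_const.add (continuous_const.mul continuous_id))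
  have intQ : IntervalIntegrable (fun u => Q u / u ^ α) volume 0 d := by
    rw [intervalIntegrable_iff_integrableOn_Ioc_of_le hd.le]
    exact integrableOn_div_rpow α hα0 hα1 d Q hQc
  have int_neg : IntervalIntegrable (fun u : ℝ => u ^ (-α)) volume 0 d :=
    intervalIntegral.intervalIntegrable_rpow' (by linarith)
  have int_pow1 : IntervalIntegrable (fun u : ℝ => u ^ (1 - α)) volume 0 d :=
    intervalIntegral.intervalIntegrable_rpow' (by linarith)
  have hsplit : (∫ u in (0:ℝ)..d, P u / u ^ α)
      = (∫ u in (0:ℝ)..d, Q u / u ^ α)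
        + (a * (d ^ (1 - α) / (1 - α)) + b * (d ^ (2 - α) / (2 - α))) := by
    have hcongr : Set.EqOn (fun u : ℝ => P u / u ^ α)
        (fun u : ℝ => Q u / u ^ α + (a * u ^ (-α) + b * u ^ (1 - α)))
        (Set.uIcc (0:ℝ) d) := by
      intro u hu
      rw [Set.uIcc_of_le hd.le] at hu
      rcases eq_or_lt_of_le hu.1 with h | h
      · simp only [← h, Real.zero_rpow hα0.ne', Real.zero_rpow h1α.ne',
          Real.zero_rpow h2α.ne', Real.zero_rpow (neg_ne_zero.mpr hα0.ne'), div_zero,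
          mul_zero, add_zero, zero_add]
      · have hne : u ^ α ≠ 0 := (Real.rpow_pos_of_pos h α).ne'
        have e1 : u ^ (-α) = (u ^ α)⁻¹ := Real.rpow_neg h.le α
        have e2 : u ^ (1 - α) = u * (u ^ α)⁻¹ := by
          rw [show (1:ℝ) - α = 1 + -α by ring, Real.rpow_add h, Real.rpow_one,
            Real.rpow_neg h.le]
        simp only [hQdef, e1, e2]
        field_simp
        ring
    rw [intervalIntegral.integral_congr hcongr,
      intervalIntegral.integral_add intQ ((int_neg.const_mul a).add (int_pow1.const_mul b)),
      intervalIntegral.integral_add (int_neg.const_mul a) (int_pow1.const_mul b),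
      intervalIntegral.integral_const_mul, intervalIntegral.integral_const_mul, I1, I2]
  rw [hsplit, add_sub_cancel_right]
  have hb2 : ‖∫ u in (0:ℝ)..d, Q u / u ^ α‖
      ≤ |∫ u in (0:ℝ)..d, (e₀ * u ^ (-α) + e₁ * u ^ (1 - α))| := by
    apply intervalIntegral.norm_integral_le_abs_of_norm_le
    · rw [Set.uIoc_of_le hd.le]
      refine (ae_restrict_iff' measurableSet_Ioc).mpr (ae_of_all _ ?_)
      intro t ht
      have ht0 : (0:ℝ) < t := ht.1
      have htα : (0:ℝ) < t ^ α := Real.rpow_pos_of_pos ht0 α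
      have e1 : t ^ (-α) = (t ^ α)⁻¹ := Real.rpow_neg ht0.le α
      have e2 : t ^ (1 - α) = t * (t ^ α)⁻¹ := by
        rw [show (1:ℝ) - α = 1 + -α by ring, Real.rpow_add ht0, Real.rpow_one,
          Real.rpow_neg ht0.le]
      rw [Real.norm_eq_abs, abs_div, abs_of_pos htα]
      calc |Q t| / t ^ α ≤ (e₀ + e₁ * t) / t ^ α := by
            exact (div_le_div_iff_of_pos_right htα).mpr (hbound t ht)
        _ = e₀ * t ^ (-α) + e₁ * t ^ (1 - α) := by rw [e1, e2]; field_simp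
    · exact (int_neg.const_mul e₀).add (int_pow1.const_mul e₁)
  have hval : (∫ u in (0:ℝ)..d, (e₀ * u ^ (-α) + e₁ * u ^ (1 - α)))
      = e₀ * (d ^ (1 - α) / (1 - α)) + e₁ * (d ^ (2 - α) / (2 - α)) := by
    rw [intervalIntegral.integral_add (int_neg.const_mul e₀) (int_pow1.const_mul e₁),
      intervalIntegral.integral_const_mul, intervalIntegral.integral_const_mul, I1, I2]
  rw [hval] at hb2
  have hnn : 0 ≤ e₀ * (d ^ (1 - α) / (1 - α)) + e₁ * (d ^ (2 - α) / (2 - α)) := by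
    apply add_nonneg <;> apply mul_nonneg
    · exact he₀
    · positivity
    · exact he₁
    · positivity
  calc |∫ u in (0:ℝ)..d, Q u / u ^ α| = ‖∫ u in (0:ℝ)..d, Q u / u ^ α‖ :=
        (Real.norm_eq_abs _).symm
    _ ≤ _ := hb2.trans_eq (abs_of_nonneg hnn)

lemma substIntegral (g : ℝ → ℝ) (α x c s d : ℝ) (hs : s = 1 ∨ s = -1)
    (hsd : x - c = s * d) (hd : 0 ≤ d) :
    (∫ t in c..x, g t / |x - t| ^ α) = s * ∫ u in (0:ℝ)..d, g (x - s * u) / u ^ α := by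
  have hss : s * s = 1 := by rcases hs with h | h <;> rw [h] <;> norm_num
  have hsne : s ≠ 0 := by rcases hs with h | h <;> rw [h] <;> norm_num
  have step1 : (∫ t in c..x, g t / |x - t| ^ α)
      = ∫ t in c..x, g (x - s * (s * x - s * t)) / (s * x - s * t) ^ α := by
    apply intervalIntegral.integral_congr
    intro t ht
    have h1 : x - s * (s * x - s * t) = t := by
      have h2 : s * (s * x - s * t) = (s * s) * (x - t) := by ring
      rw [h2, hss]; ring
    have h2 : s * x - s * t = |x - t| := by
      rcases hs with h | h
      · subst h
        have hcx : c ≤ x := by nlinarith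
        rw [Set.uIcc_of_le hcx] at ht
        rw [abs_of_nonneg (by linarith [ht.2])]
        ring
      · subst h
        have hcx : x ≤ c := by nlinarith
        rw [Set.uIcc_of_ge hcx] at ht
        rw [abs_of_nonpos (by linarith [ht.1])]
        ring
    simp only []
    rw [h1, h2]
  rw [step1]
  have e2 : (∫ t in c..x, g (x - s * (s * x - s * t)) / (s * x - s * t) ^ α)
      = s⁻¹ • ∫ v in s * c..s * x, g (x - s * (s * x - v)) / (s * x - v) ^ α :=
    intervalIntegral.integral_comp_mul_left
      (fun v => g (x - s * (s * x - v)) / (s * x - v) ^ α) hsne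
  have e3 : (∫ v in s * c..s * x, g (x - s * (s * x - v)) / (s * x - v) ^ α)
      = ∫ w in (s * x - s * x)..(s * x - s * c), g (x - s * w) / w ^ α :=
    intervalIntegral.integral_comp_sub_left (fun w => g (x - s * w) / w ^ α) (s * x)
  rw [e2, e3]
  have h4 : s * x - s * x = 0 := by ring
  have h5 : s * x - s * c = d := by
    have h6 : s * x - s * c = s * (x - c) := by ring
    rw [h6, hsd, ← mul_assoc, hss, one_mul]
  have h7 : s⁻¹ = s := by rcases hs with h | h <;> rw [h] <;> norm_num
  rw [h4, h5, smul_eq_mul, h7]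

/-- approximation of the fractional gradient operator by the first derivative,
case `β ≥ 0`. -/
theorem fracGrad_approx_of_beta_nonneg (f : ℝ → ℝ) (hf : ContDiff ℝ 2 f) (L μ : ℝ)
    (hμ : 0 ≤ μ) (hμL : μ ≤ L) (hsmooth : RSmooth L f) (hconv : RStrongConvex μ f)
    (α β : ℝ) (hα : α ∈ Set.Ioo (0 : ℝ) 1) (hβ : 0 ≤ β)
    (γ K₁ K₂ : ℝ) (hγ : γ = (1 - α) / (2 - α))
    (hK₁ : K₁ = (L + μ) / 2 * (β - γ)) (hK₂ : K₂ = (L - μ) / 2 * (β + γ)) :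
    ∀ x c : ℝ, x ≠ c →
      |fracGrad α β c f x - deriv f x - K₁ * (x - c)| ≤ K₂ * |x - c| := by
  obtain ⟨hα0, hα1⟩ := hα
  have h1α : (0:ℝ) < 1 - α := by linarith
  have h2α : (0:ℝ) < 2 - α := by linarith
  -- regularity
  have hf2 : ContDiff ℝ ((1 : WithTop ℕ∞) + 1) f := by
    have h : ((1 : WithTop ℕ∞) + 1) = 2 := by norm_num
    rw [h]; exact hf
  have hcd := contDiff_succ_iff_deriv.mp hf2
  have hcd1 := contDiff_one_iff_deriv.mp hcd.2.2
  have hdf1 : Differentiable ℝ (deriv f) := hcd1.1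
  have hcf1 : Continuous (deriv f) := hdf1.continuous
  have hcf2 : Continuous (deriv (deriv f)) := hcd1.2
  have hΓ1 : (0:ℝ) < Real.Gamma (1 - α) := Real.Gamma_pos_of_pos h1α
  have hΓ2 : Real.Gamma (2 - α) = (1 - α) * Real.Gamma (1 - α) := by
    rw [show (2:ℝ) - α = (1 - α) + 1 by ring, Real.Gamma_add_one h1α.ne']
  intro x c hxc
  set m := (L + μ) / 2 with hm
  set r := (L - μ) / 2 with hr
  have hr0 : 0 ≤ r := by rw [hr]; linarith
  set d := |x - c| with hddef
  have hd : 0 < d := abs_pos.mpr (sub_ne_zero.mpr hxc)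
  set s : ℝ := if c < x then 1 else -1 with hsdef
  have hs : s = 1 ∨ s = -1 := by by_cases h : c < x <;> simp [hsdef, h]
  have hsabs : |s| = 1 := by rcases hs with h | h <;> rw [h] <;> norm_num
  have hsd : x - c = s * d := by
    by_cases h : c < x
    · rw [hsdef, if_pos h, one_mul, hddef, abs_of_pos (by linarith)]
    · have hx : x < c := lt_of_le_of_ne (not_lt.mp h) hxc
      rw [hsdef, if_neg h, hddef, abs_of_neg (by linarith : x - c < 0)]; ring
  have hsign : Real.sign (x - c) = s := by
    by_cases h : c < x
    · rw [hsdef, if_pos h, Real.sign_of_pos (sub_pos.mpr h)]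
    · have hx : x < c := lt_of_le_of_ne (not_lt.mp h) hxc
      rw [hsdef, if_neg h, Real.sign_of_neg (sub_neg.mpr hx)]
  -- rpow identities
  have hXpos : (0:ℝ) < d ^ (α - 1) := Real.rpow_pos_of_pos hd _
  have e1 : d ^ (1 - α) = (d ^ (α - 1))⁻¹ := by
    rw [show (1:ℝ) - α = -(α - 1) by ring, Real.rpow_neg hd.le]
  have e2 : d ^ (2 - α) = d * (d ^ (α - 1))⁻¹ := by
    rw [show (2:ℝ) - α = 1 + (1 - α) by ring, Real.rpow_add hd, Real.rpow_one, e1]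
  have hdα : d ^ α = d ^ (α - 1) * d := by
    nth_rewrite 1 [show α = (α - 1) + 1 by ring]
    exact Real.rpow_add_one hd.ne' (α - 1)
  -- pointwise bounds
  have hP₁ : Continuous fun u : ℝ => deriv f (x - s * u) :=
    hcf1.comp (continuous_const.sub (continuous_const.mul continuous_id))
  have hP₂ : Continuous fun u : ℝ => deriv (deriv f) (x - s * u) :=
    hcf2.comp (continuous_const.sub (continuous_const.mul continuous_id))
  have hbound₁ : ∀ u ∈ Set.Ioc (0:ℝ) d,
      |deriv f (x - s * u) - (deriv f x + (-(s * m)) * u)| ≤ 0 + r * u := by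
    intro u hu
    have hb := derivDiffBound f L μ hsmooth hconv x (x - s * u)
    rw [← hm, ← hr] at hb
    have habs : |x - s * u - x| = u := by
      rw [show x - s * u - x = -(s * u) by ring, abs_neg, abs_mul, hsabs, one_mul,
        abs_of_nonneg hu.1.le]
    have heq : deriv f (x - s * u) - (deriv f x + (-(s * m)) * u)
        = deriv f (x - s * u) - deriv f x - m * (x - s * u - x) := by ring
    rw [heq, zero_add]
    calc |deriv f (x - s * u) - deriv f x - m * (x - s * u - x)|
        ≤ r * |x - s * u - x| := hb
      _ = r * u := by rw [habs]
  have hbound₂ : ∀ u ∈ Set.Ioc (0:ℝ) d,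
      |deriv (deriv f) (x - s * u) - (m + 0 * u)| ≤ r + 0 * u := by
    intro u hu
    have hb := secondDerivBound f hdf1 L μ hsmooth hconv (x - s * u)
    rw [← hm, ← hr] at hb
    calc |deriv (deriv f) (x - s * u) - (m + 0 * u)|
        = |deriv (deriv f) (x - s * u) - m| := by ring_nf
      _ ≤ r := hb
      _ = r + 0 * u := by ring
  have key₁ := keyIntegral α hα0 hα1 d hd (fun u : ℝ => deriv f (x - s * u)) hP₁
    (deriv f x) (-(s * m)) 0 r le_rfl hr0 hbound₁
  have key₂ := keyIntegral α hα0 hα1 d hd (fun u : ℝ => deriv (deriv f) (x - s * u)) hP₂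
    m 0 r 0 hr0 le_rfl hbound₂
  set I₁ : ℝ := ∫ u in (0:ℝ)..d, deriv f (x - s * u) / u ^ α with hI₁
  set I₂ : ℝ := ∫ u in (0:ℝ)..d, deriv (deriv f) (x - s * u) / u ^ α with hI₂
  set A₁ : ℝ := deriv f x * (d ^ (1 - α) / (1 - α)) + (-(s * m)) * (d ^ (2 - α) / (2 - α))
    with hA₁def
  set A₂ : ℝ := m * (d ^ (1 - α) / (1 - α)) with hA₂def
  have key₁' : |I₁ - A₁| ≤ r * (d ^ (2 - α) / (2 - α)) := by
    have h := key₁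
    simp only [zero_mul, zero_add] at h
    exact h
  have key₂' : |I₂ - A₂| ≤ r * (d ^ (1 - α) / (1 - α)) := by
    have h := key₂
    simp only [zero_mul, add_zero] at h
    exact h
  have hcap1 : caputo α c f x = (1 / Real.Gamma (1 - α)) * (s * I₁) := by
    simp only [caputo]
    rw [substIntegral (deriv f) α x c s d hs hsd hd.le, hI₁]
  have hcap2 : caputoSucc α c f x = (s / Real.Gamma (1 - α)) * (s * I₂) := by
    simp only [caputoSucc]
    rw [substIntegral (deriv (deriv f)) α x c s d hs hsd hd.le, hsign, hI₂]
  have hfg : fracGrad α β c f x = (1 - α) * d ^ (α - 1) * (I₁ + s * (β * d * I₂)) := by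
    simp only [fracGrad, if_neg hxc]
    rw [hcap1, hcap2, ← hddef, hsd, hΓ2, hdα]
    rcases hs with h | h <;> rw [h] <;> field_simp <;> ring
  have hmain : (1 - α) * d ^ (α - 1) * (A₁ + s * (β * d * A₂))
      = deriv f x + K₁ * (s * d) := by
    rw [hA₁def, hA₂def, hK₁, hγ, e1, e2]
    rcases hs with h | h <;> rw [h] <;> field_simp <;> ring
  rw [hfg, hsd]
  have hgoal_eq : (1 - α) * d ^ (α - 1) * (I₁ + s * (β * d * I₂)) - deriv f x - K₁ * (s * d)
      = (1 - α) * d ^ (α - 1) * ((I₁ - A₁) + s * (β * d * (I₂ - A₂))) := by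
    linear_combination hmain
  rw [hgoal_eq]
  have hpre : (0:ℝ) ≤ (1 - α) * d ^ (α - 1) := (mul_pos h1α hXpos).le
  calc |(1 - α) * d ^ (α - 1) * ((I₁ - A₁) + s * (β * d * (I₂ - A₂)))|
      = (1 - α) * d ^ (α - 1) * |(I₁ - A₁) + s * (β * d * (I₂ - A₂))| := by
        rw [abs_mul, abs_of_nonneg hpre]
    _ ≤ (1 - α) * d ^ (α - 1) * (|I₁ - A₁| + β * d * |I₂ - A₂|) := by
        apply mul_le_mul_of_nonneg_left ?_ hpre
        calc |(I₁ - A₁) + s * (β * d * (I₂ - A₂))|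
            ≤ |I₁ - A₁| + |s * (β * d * (I₂ - A₂))| := abs_add_le _ _
          _ = |I₁ - A₁| + β * d * |I₂ - A₂| := by
              rw [abs_mul, hsabs, one_mul, abs_mul, abs_mul, abs_of_nonneg hβ,
                abs_of_pos hd, mul_assoc]
    _ ≤ (1 - α) * d ^ (α - 1) * (r * (d ^ (2 - α) / (2 - α))
          + β * d * (r * (d ^ (1 - α) / (1 - α)))) := by
        apply mul_le_mul_of_nonneg_left ?_ hpre
        exact add_le_add key₁' (mul_le_mul_of_nonneg_left key₂'
          (mul_nonneg hβ hd.le))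
    _ = K₂ * d := by
        rw [hK₂, hγ, e1, e2]
        field_simp
        ring
end

section
/- Let f : ℝ → ℝ be twice continuously differentiable, L-smooth, and μ-strongly convex with 0 ≤ μ ≤ L; let α ∈ (0,1) and β ≤ 0. Set γ = (1−α)/(2−α), K₁ = ((L+μ)/2)(β−γ), K₂ = ((μ−L)/2)(β−γ). Then for all x, c with x ≠ c: |δ^{α,β}_c f(x) − f′(x) − K₁(x−c)| ≤ K₂·|x−c|. -/
open MeasureTheory intervalIntegral Set

private lemma rpow_int_eval {r : ℝ} (h : ℝ) (hr : -1 < r) :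
    ∫ s in (0:ℝ)..h, s ^ r = h ^ (r + 1) / (r + 1) := by
  rw [integral_rpow (Or.inl hr), Real.zero_rpow (by linarith), sub_zero]

private lemma mul_rpow_self {α : ℝ} (hα0 : 0 < α) (hα1 : α < 1) {s : ℝ} (hs : 0 ≤ s) :
    s * s ^ (-α) = s ^ (1 - α) := by
  rcases eq_or_lt_of_le hs with h | h
  · rw [← h, Real.zero_rpow (by linarith), Real.zero_rpow (by linarith), mul_zero]
  · rw [show (1:ℝ) - α = 1 + -α by ring, Real.rpow_add h, Real.rpow_one]

private lemma core {α β μ L h : ℝ} {A B : ℝ → ℝ} (hα0 : 0 < α) (hα1 : α < 1) (hβ : β ≤ 0)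
    (hh : 0 < h)
    (hA : ContinuousOn A (Set.Icc 0 h)) (hB : ContinuousOn B (Set.Icc 0 h))
    (hAb : ∀ s ∈ Set.Icc (0:ℝ) h, -L * s ≤ A s ∧ A s ≤ -μ * s)
    (hBb : ∀ s ∈ Set.Icc (0:ℝ) h, μ ≤ B s ∧ B s ≤ L) :
    (β - (1-α)/(2-α)) * L * h ≤ (1-α) * h^(α-1) *
      ((∫ s in (0:ℝ)..h, A s * s^(-α)) + β * h * ∫ s in (0:ℝ)..h, B s * s^(-α)) ∧
    (1-α) * h^(α-1) * ((∫ s in (0:ℝ)..h, A s * s^(-α)) + β * h * ∫ s in (0:ℝ)..h, B s * s^(-α))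
      ≤ (β - (1-α)/(2-α)) * μ * h := by
  have huIcc : Set.uIcc (0:ℝ) h = Set.Icc 0 h := Set.uIcc_of_le hh.le
  have I0 : IntervalIntegrable (fun s : ℝ => s ^ (-α)) volume 0 h :=
    intervalIntegrable_rpow' (by linarith)
  have I1 : IntervalIntegrable (fun s : ℝ => s ^ (1-α)) volume 0 h :=
    intervalIntegrable_rpow' (by linarith)
  have IA : IntervalIntegrable (fun s => A s * s ^ (-α)) volume 0 h :=
    I0.continuousOn_mul (huIcc ▸ hA)
  have IB : IntervalIntegrable (fun s => B s * s ^ (-α)) volume 0 h :=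
    I0.continuousOn_mul (huIcc ▸ hB)
  have J0 : (∫ s in (0:ℝ)..h, s ^ (-α)) = h ^ (1-α) / (1-α) := by
    rw [rpow_int_eval h (by linarith : (-1:ℝ) < -α), show -α+1 = 1-α from by ring]
  have J1 : (∫ s in (0:ℝ)..h, s ^ (1-α)) = h ^ (2-α) / (2-α) := by
    rw [rpow_int_eval h (by linarith : (-1:ℝ) < 1-α), show 1-α+1 = 2-α from by ring]
  have rnn : ∀ s ∈ Set.Icc (0:ℝ) h, (0:ℝ) ≤ s ^ (-α) := fun s hs =>
    Real.rpow_nonneg hs.1 _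
  have hAlo : -L * (h ^ (2-α) / (2-α)) ≤ ∫ s in (0:ℝ)..h, A s * s ^ (-α) := by
    have := integral_mono_on hh.le (I1.const_mul (-L)) IA (fun s hs => by
      have h1 : -L * s ^ (1-α) = (-L * s) * s ^ (-α) := by
        rw [← mul_rpow_self hα0 hα1 hs.1]; ring
      calc -L * s ^ (1-α) = (-L * s) * s ^ (-α) := h1
        _ ≤ A s * s ^ (-α) := mul_le_mul_of_nonneg_right (hAb s hs).1 (rnn s hs))
    simpa [intervalIntegral.integral_const_mul, J1] using this
  have hAhi : (∫ s in (0:ℝ)..h, A s * s ^ (-α)) ≤ -μ * (h ^ (2-α) / (2-α)) := by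
    have := integral_mono_on hh.le IA (I1.const_mul (-μ)) (fun s hs => by
      have h1 : -μ * s ^ (1-α) = (-μ * s) * s ^ (-α) := by
        rw [← mul_rpow_self hα0 hα1 hs.1]; ring
      calc A s * s ^ (-α) ≤ (-μ * s) * s ^ (-α) :=
            mul_le_mul_of_nonneg_right (hAb s hs).2 (rnn s hs)
        _ = -μ * s ^ (1-α) := h1.symm)
    simpa [intervalIntegral.integral_const_mul, J1] using this
  have hBlo : μ * (h ^ (1-α) / (1-α)) ≤ ∫ s in (0:ℝ)..h, B s * s ^ (-α) := by
    have := integral_mono_on hh.le (I0.const_mul μ) IB (fun s hs =>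
      mul_le_mul_of_nonneg_right (hBb s hs).1 (rnn s hs))
    simpa [intervalIntegral.integral_const_mul, J0] using this
  have hBhi : (∫ s in (0:ℝ)..h, B s * s ^ (-α)) ≤ L * (h ^ (1-α) / (1-α)) := by
    have := integral_mono_on hh.le IB (I0.const_mul L) (fun s hs =>
      mul_le_mul_of_nonneg_right (hBb s hs).2 (rnn s hs))
    simpa [intervalIntegral.integral_const_mul, J0] using this
  set IAv := ∫ s in (0:ℝ)..h, A s * s ^ (-α)
  set IBv := ∫ s in (0:ℝ)..h, B s * s ^ (-α)
  have hc : 0 < (1-α) * h^(α-1) :=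
    mul_pos (by linarith) (Real.rpow_pos_of_pos hh _)
  have hp1 : h ^ (α-1) * h ^ (2-α) = h := by
    rw [← Real.rpow_add hh, show α-1+(2-α) = 1 from by ring, Real.rpow_one]
  have hp0 : h ^ (α-1) * h ^ (1-α) = 1 := by
    rw [← Real.rpow_add hh, show α-1+(1-α) = 0 from by ring, Real.rpow_zero]
  have hkey1 : (1-α) * h^(α-1) * (h ^ (2-α) / (2-α)) = (1-α)/(2-α) * h := by
    rw [show (1-α) * h^(α-1) * (h ^ (2-α)/(2-α)) = (h^(α-1) * h^(2-α)) * ((1-α)/(2-α)) from by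
      ring, hp1]
    ring
  have hkey0 : (1-α) * h^(α-1) * (h * (h ^ (1-α) / (1-α))) = h := by
    rw [show (1-α) * h^(α-1) * (h * (h ^ (1-α)/(1-α))) =
      (h^(α-1) * h^(1-α)) * ((1-α)/(1-α)) * h from by ring, hp0,
      div_self (show (1:ℝ)-α ≠ 0 from by linarith)]
    ring
  have hβB1 : β * h * IBv ≥ β * h * (L * (h ^ (1-α) / (1-α))) := by
    apply mul_le_mul_of_nonpos_left hBhi (by nlinarith)
  have hβB2 : β * h * IBv ≤ β * h * (μ * (h ^ (1-α) / (1-α))) := by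
    apply mul_le_mul_of_nonpos_left hBlo (by nlinarith)
  constructor
  · have hlow : IAv + β*h*IBv ≥ -L * (h ^ (2-α)/(2-α)) + β*h*(L*(h^(1-α)/(1-α))) := by linarith
    calc (β - (1-α)/(2-α)) * L * h
        = (1-α)*h^(α-1) * (-L * (h ^ (2-α)/(2-α)) + β*h*(L*(h^(1-α)/(1-α)))) := by
          linear_combination L * hkey1 - β * L * hkey0
      _ ≤ (1-α)*h^(α-1) * (IAv + β*h*IBv) := by
          exact mul_le_mul_of_nonneg_left hlow hc.le
  · have hhigh : IAv + β*h*IBv ≤ -μ * (h ^ (2-α)/(2-α)) + β*h*(μ*(h^(1-α)/(1-α))) := by linarith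
    calc (1-α)*h^(α-1) * (IAv + β*h*IBv)
        ≤ (1-α)*h^(α-1) * (-μ * (h ^ (2-α)/(2-α)) + β*h*(μ*(h^(1-α)/(1-α)))) := by
          exact mul_le_mul_of_nonneg_left hhigh hc.le
      _ = (β - (1-α)/(2-α)) * μ * h := by
          linear_combination (-μ) * hkey1 + β * μ * hkey0

private lemma slope_bd {f : ℝ → ℝ} {L μ : ℝ} (hs : RSmooth L f) (hc : RStrongConvex μ f)
    (x y : ℝ) : μ * (y-x)^2 ≤ (deriv f y - deriv f x) * (y-x) ∧
      (deriv f y - deriv f x) * (y-x) ≤ L * (y-x)^2 := by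
  have h1 := hc x y
  have h2 := hc y x
  have h3 := abs_le.mp (hs x y)
  have h4 := abs_le.mp (hs y x)
  constructor <;> nlinarith [sq_nonneg (y-x), sq_nonneg (x-y)]

private lemma deriv2_bd {f : ℝ → ℝ} {L μ : ℝ} (hf : ContDiff ℝ 2 f) (hs : RSmooth L f)
    (hc : RStrongConvex μ f) (x : ℝ) :
    μ ≤ deriv (deriv f) x ∧ deriv (deriv f) x ≤ L := by
  have h2 : ContDiff ℝ (1+1) f := by norm_num; exact hf
  have hf' : ContDiff ℝ 1 (deriv f) := (contDiff_succ_iff_deriv.mp h2).2.2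
  have hd2 : Differentiable ℝ (deriv f) := hf'.differentiable one_ne_zero
  have ht : Filter.Tendsto (slope (deriv f) x) (nhdsWithin x {x}ᶜ)
      (nhds (deriv (deriv f) x)) := hasDerivAt_iff_tendsto_slope.mp (hd2 x).hasDerivAt
  have hev : ∀ y ∈ ({x}ᶜ : Set ℝ), μ ≤ slope (deriv f) x y ∧ slope (deriv f) x y ≤ L := by
    intro y hy
    have hyx : y - x ≠ 0 := sub_ne_zero.mpr hy
    have hb := slope_bd hs hc x y
    have hp : (0:ℝ) < (y-x)^2 := by positivity
    have e : slope (deriv f) x y = (deriv f y - deriv f x) * (y-x) / (y-x)^2 := by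
      rw [slope_def_field]; field_simp
    rw [e]
    exact ⟨(le_div_iff₀ hp).mpr hb.1, (div_le_iff₀ hp).mpr hb.2⟩
  constructor
  · exact ge_of_tendsto ht (eventually_nhdsWithin_of_forall fun y hy => (hev y hy).1)
  · exact le_of_tendsto ht (eventually_nhdsWithin_of_forall fun y hy => (hev y hy).2)

private lemma int_pos {α : ℝ} (hα0 : 0 < α) (g : ℝ → ℝ) {c x : ℝ} (hcx : c < x) :
    (∫ t in c..x, g t / |x - t| ^ α) = ∫ s in (0:ℝ)..(x-c), g (x - s) * s ^ (-α) := by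
  have h1 : EqOn (fun t => g t / |x - t| ^ α)
      (fun t => (fun s => g (x - s) * s ^ (-α)) (x - t)) (uIcc c x) := by
    intro t ht
    rw [uIcc_of_le hcx.le] at ht
    simp only [sub_sub_cancel]
    rw [abs_of_nonneg (by linarith [ht.2] : (0:ℝ) ≤ x - t)]
    rcases eq_or_lt_of_le ht.2 with h | h
    · rw [h, sub_self, Real.zero_rpow (ne_of_gt hα0),
        Real.zero_rpow (neg_ne_zero.mpr (ne_of_gt hα0))]
      simp
    · rw [Real.rpow_neg (by linarith), div_eq_mul_inv]
  rw [integral_congr h1, integral_comp_sub_left (fun s => g (x - s) * s ^ (-α)) x, sub_self]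

private lemma int_neg {α : ℝ} (hα0 : 0 < α) (g : ℝ → ℝ) {c x : ℝ} (hxc : x < c) :
    (∫ t in c..x, g t / |x - t| ^ α) = -∫ s in (0:ℝ)..(c-x), g (x + s) * s ^ (-α) := by
  rw [integral_symm]
  congr 1
  have h1 : EqOn (fun t => g t / |x - t| ^ α)
      (fun t => (fun s => g (x + s) * s ^ (-α)) (t - x)) (uIcc x c) := by
    intro t ht
    rw [uIcc_of_le hxc.le] at ht
    simp only [add_sub_cancel]
    rw [abs_of_nonpos (by linarith [ht.1] : x - t ≤ 0), neg_sub]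
    rcases eq_or_lt_of_le ht.1 with h | h
    · rw [← h, sub_self, Real.zero_rpow (ne_of_gt hα0),
        Real.zero_rpow (neg_ne_zero.mpr (ne_of_gt hα0))]
      simp
    · rw [Real.rpow_neg (by linarith), div_eq_mul_inv]
  rw [integral_congr h1, integral_comp_sub_right (fun s => g (x + s) * s ^ (-α)) x, sub_self]

private lemma alg_id {Γ1 d u v P e β fx IA IB : ℝ} (hΓ : Γ1 ≠ 0) (hd : d ≠ 0) (he : e ≠ 0)
    (hu : P * d = u) (hPv : P * v = 1) :
    (e * Γ1 * u / d) * ((1/Γ1)*(IA + fx*(v/e)) + β*d*((1/Γ1)*IB))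
      = fx + e*P*(IA + β*d*IB) := by
  subst hu
  field_simp
  linear_combination fx * hPv

private lemma alg_id2 {Γ1 d u v P e β fx IA IB : ℝ} (hΓ : Γ1 ≠ 0) (hd : d ≠ 0) (he : e ≠ 0)
    (hu : P * d = u) (hPv : P * v = 1) :
    e * Γ1 * u / (-d) * (1/Γ1 * -(IA + fx*(v/e)) + β*d*(-1/Γ1 * -IB))
      = fx - e*P*(-IA + β*d*IB) := by
  subst hu
  field_simp
  linear_combination fx * hPv

private lemma fracGrad_eq_pos {f : ℝ → ℝ} (hf : ContDiff ℝ 2 f) {α β c x : ℝ}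
    (hα0 : 0 < α) (hα1 : α < 1) (hcx : c < x) :
    fracGrad α β c f x = deriv f x + (1-α) * (x-c)^(α-1) *
      ((∫ s in (0:ℝ)..(x-c), (deriv f (x-s) - deriv f x) * s^(-α)) +
        β * (x-c) * ∫ s in (0:ℝ)..(x-c), deriv (deriv f) (x-s) * s^(-α)) := by
  have hh : 0 < x - c := by linarith
  have hΓpos : 0 < Real.Gamma (1-α) := Real.Gamma_pos_of_pos (by linarith)
  have hΓ : Real.Gamma (2-α) = (1-α) * Real.Gamma (1-α) := by
    rw [show (2:ℝ)-α = (1-α)+1 from by ring, Real.Gamma_add_one (by linarith)]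
  have h2 : ContDiff ℝ (1+1) f := by norm_num; exact hf
  have hf' : ContDiff ℝ 1 (deriv f) := (contDiff_succ_iff_deriv.mp h2).2.2
  have hc1 : Continuous (deriv f) := hf'.continuous
  have I0 : IntervalIntegrable (fun s : ℝ => s ^ (-α)) volume 0 (x-c) :=
    intervalIntegrable_rpow' (by linarith)
  have J0 : (∫ s in (0:ℝ)..(x-c), s ^ (-α)) = (x-c) ^ (1-α)/(1-α) := by
    rw [rpow_int_eval (x-c) (by linarith : (-1:ℝ) < -α), show -α+1 = 1-α from by ring]
  have IA : IntervalIntegrable (fun s => (deriv f (x-s) - deriv f x) * s^(-α)) volume 0 (x-c) :=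
    I0.continuousOn_mul (((hc1.comp (continuous_const.sub continuous_id)).sub
      continuous_const).continuousOn)
  have split : (∫ s in (0:ℝ)..(x-c), deriv f (x-s) * s^(-α))
      = (∫ s in (0:ℝ)..(x-c), (deriv f (x-s) - deriv f x) * s^(-α))
        + deriv f x * ((x-c)^(1-α)/(1-α)) := by
    rw [← J0, ← intervalIntegral.integral_const_mul, ← integral_add IA (I0.const_mul _)]
    congr 1; funext s; ring
  have hp : (x-c) ^ (α-1) * (x-c) = (x-c) ^ α := by
    rw [← Real.rpow_add_one hh.ne' (α-1), sub_add_cancel]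
  have hq : (x-c) ^ (α-1) * (x-c) ^ (1-α) = 1 := by
    rw [← Real.rpow_add hh, show α-1+(1-α) = 0 from by ring, Real.rpow_zero]
  rw [fracGrad, if_neg (by intro hxc; rw [hxc] at hh; linarith), caputo, caputoSucc,
    int_pos hα0 (deriv f) hcx, int_pos hα0 (deriv (deriv f)) hcx,
    Real.sign_of_pos hh, abs_of_pos hh, split, hΓ]
  exact alg_id (ne_of_gt hΓpos) hh.ne' (by intro h; rw [sub_eq_zero] at h; linarith) hp hq

private lemma fracGrad_eq_neg {f : ℝ → ℝ} (hf : ContDiff ℝ 2 f) {α β c x : ℝ}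
    (hα0 : 0 < α) (hα1 : α < 1) (hxc : x < c) :
    fracGrad α β c f x = deriv f x - (1-α) * (c-x)^(α-1) *
      ((∫ s in (0:ℝ)..(c-x), (deriv f x - deriv f (x+s)) * s^(-α)) +
        β * (c-x) * ∫ s in (0:ℝ)..(c-x), deriv (deriv f) (x+s) * s^(-α)) := by
  have hh : 0 < c - x := by linarith
  have hΓpos : 0 < Real.Gamma (1-α) := Real.Gamma_pos_of_pos (by linarith)
  have hΓ : Real.Gamma (2-α) = (1-α) * Real.Gamma (1-α) := by
    rw [show (2:ℝ)-α = (1-α)+1 from by ring, Real.Gamma_add_one (by linarith)]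
  have h2 : ContDiff ℝ (1+1) f := by norm_num; exact hf
  have hf' : ContDiff ℝ 1 (deriv f) := (contDiff_succ_iff_deriv.mp h2).2.2
  have hc1 : Continuous (deriv f) := hf'.continuous
  have I0 : IntervalIntegrable (fun s : ℝ => s ^ (-α)) volume 0 (c-x) :=
    intervalIntegrable_rpow' (by linarith)
  have J0 : (∫ s in (0:ℝ)..(c-x), s ^ (-α)) = (c-x) ^ (1-α)/(1-α) := by
    rw [rpow_int_eval (c-x) (by linarith : (-1:ℝ) < -α), show -α+1 = 1-α from by ring]
  have IA : IntervalIntegrable (fun s => (deriv f (x+s) - deriv f x) * s^(-α)) volume 0 (c-x) :=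
    I0.continuousOn_mul (((hc1.comp (continuous_const.add continuous_id)).sub
      continuous_const).continuousOn)
  have split : (∫ s in (0:ℝ)..(c-x), deriv f (x+s) * s^(-α))
      = (∫ s in (0:ℝ)..(c-x), (deriv f (x+s) - deriv f x) * s^(-α))
        + deriv f x * ((c-x)^(1-α)/(1-α)) := by
    rw [← J0, ← intervalIntegral.integral_const_mul, ← integral_add IA (I0.const_mul _)]
    congr 1; funext s; ring
  have hflip : (∫ s in (0:ℝ)..(c-x), (deriv f x - deriv f (x+s)) * s^(-α))
      = -∫ s in (0:ℝ)..(c-x), (deriv f (x+s) - deriv f x) * s^(-α) := by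
    have e : ∀ s:ℝ, (deriv f x - deriv f (x+s)) * s^(-α)
        = -((deriv f (x+s) - deriv f x) * s^(-α)) := fun s => by ring
    simp only [e, intervalIntegral.integral_neg]
  have hp : (c-x) ^ (α-1) * (c-x) = (c-x) ^ α := by
    rw [← Real.rpow_add_one hh.ne' (α-1), sub_add_cancel]
  have hq : (c-x) ^ (α-1) * (c-x) ^ (1-α) = 1 := by
    rw [← Real.rpow_add hh, show α-1+(1-α) = 0 from by ring, Real.rpow_zero]
  have hsign : Real.sign (x - c) = -1 := Real.sign_of_neg (by linarith)
  have habs : |x - c| = c - x := by rw [abs_sub_comm, abs_of_pos hh]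
  rw [fracGrad, if_neg (by intro h; rw [h] at hh; linarith), caputo, caputoSucc,
    int_neg hα0 (deriv f) hxc, int_neg hα0 (deriv (deriv f)) hxc,
    hsign, habs, split, hflip, hΓ]
  rw [show x - c = -(c-x) from by ring]
  exact alg_id2 (ne_of_gt hΓpos) hh.ne' (by intro h; rw [sub_eq_zero] at h; linarith) hp hq

/-- approximation of the fractional gradient operator by the first derivative,
case `β ≤ 0`. -/
theorem fracGrad_approx_of_beta_nonpos (f : ℝ → ℝ) (hf : ContDiff ℝ 2 f) (L μ : ℝ)
    (hμ : 0 ≤ μ) (hμL : μ ≤ L) (hsmooth : RSmooth L f) (hconv : RStrongConvex μ f)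
    (α β : ℝ) (hα : α ∈ Set.Ioo (0 : ℝ) 1) (hβ : β ≤ 0)
    (γ K₁ K₂ : ℝ) (hγ : γ = (1 - α) / (2 - α))
    (hK₁ : K₁ = (L + μ) / 2 * (β - γ)) (hK₂ : K₂ = (μ - L) / 2 * (β - γ)) :
    ∀ x c : ℝ, x ≠ c →
      |fracGrad α β c f x - deriv f x - K₁ * (x - c)| ≤ K₂ * |x - c| := by
  obtain ⟨hα0, hα1⟩ := hα
  intro x c hxc
  have h2 : ContDiff ℝ (1+1) f := by norm_num; exact hf
  have hf' : ContDiff ℝ 1 (deriv f) := (contDiff_succ_iff_deriv.mp h2).2.2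
  have hc1 : Continuous (deriv f) := hf'.continuous
  have hc2 : Continuous (deriv (deriv f)) := hf'.continuous_deriv le_rfl
  have e1 : (K₁ - K₂) = L * (β - γ) := by rw [hK₁, hK₂]; ring
  have e2 : (K₁ + K₂) = μ * (β - γ) := by rw [hK₁, hK₂]; ring
  rcases lt_or_gt_of_ne hxc with hlt | hgt
  · -- x < c
    have hH : 0 < c - x := by linarith
    have hcore := core (A := fun s => deriv f x - deriv f (x+s))
      (B := fun s => deriv (deriv f) (x+s)) hα0 hα1 hβ hH
      ((continuous_const.sub (hc1.comp (continuous_const.add continuous_id))).continuousOn)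
      ((hc2.comp (continuous_const.add continuous_id)).continuousOn)
      (fun s hs => by
        rcases eq_or_lt_of_le hs.1 with h | h
        · rw [← h]; simp
        · have hb := slope_bd hsmooth hconv x (x+s)
          constructor
          · show -L * s ≤ deriv f x - deriv f (x+s)
            nlinarith [hb.1, hb.2]
          · show deriv f x - deriv f (x+s) ≤ -μ * s
            nlinarith [hb.1, hb.2])
      (fun s hs => deriv2_bd hf hsmooth hconv (x+s))
    set E := (1-α) * (c-x)^(α-1) *
      ((∫ s in (0:ℝ)..(c-x), (deriv f x - deriv f (x+s)) * s^(-α)) +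
        β * (c-x) * ∫ s in (0:ℝ)..(c-x), deriv (deriv f) (x+s) * s^(-α)) with hE
    have hcore' : (β - γ) * L * (c-x) ≤ E ∧ E ≤ (β - γ) * μ * (c-x) := by
      rw [hγ, hE]; exact hcore
    rw [fracGrad_eq_neg hf hα0 hα1 hlt, ← hE]
    have habs : |x - c| = c - x := by rw [abs_sub_comm, abs_of_pos hH]
    rw [habs, show deriv f x - E - deriv f x - K₁ * (x - c) = -(E - K₁ * (c-x)) from by ring,
      abs_neg, abs_le]
    constructor <;> nlinarith [hcore'.1, hcore'.2, mul_le_mul_of_nonneg_right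
      (le_of_eq e1) hH.le]
  · -- c < x
    have hH : 0 < x - c := by linarith
    have hcore := core (A := fun s => deriv f (x-s) - deriv f x)
      (B := fun s => deriv (deriv f) (x-s)) hα0 hα1 hβ hH
      (((hc1.comp (continuous_const.sub continuous_id)).sub continuous_const).continuousOn)
      ((hc2.comp (continuous_const.sub continuous_id)).continuousOn)
      (fun s hs => by
        rcases eq_or_lt_of_le hs.1 with h | h
        · rw [← h]; simp
        · have hb := slope_bd hsmooth hconv x (x-s)
          constructor
          · show -L * s ≤ deriv f (x-s) - deriv f x
            nlinarith [hb.1, hb.2]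
          · show deriv f (x-s) - deriv f x ≤ -μ * s
            nlinarith [hb.1, hb.2])
      (fun s hs => deriv2_bd hf hsmooth hconv (x-s))
    set E := (1-α) * (x-c)^(α-1) *
      ((∫ s in (0:ℝ)..(x-c), (deriv f (x-s) - deriv f x) * s^(-α)) +
        β * (x-c) * ∫ s in (0:ℝ)..(x-c), deriv (deriv f) (x-s) * s^(-α)) with hE
    have hcore' : (β - γ) * L * (x-c) ≤ E ∧ E ≤ (β - γ) * μ * (x-c) := by
      rw [hγ, hE]; exact hcore
    rw [fracGrad_eq_pos hf hα0 hα1 hgt, ← hE]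
    have habs : |x - c| = x - c := abs_of_pos hH
    rw [habs, show deriv f x + E - deriv f x - K₁ * (x - c) = E - K₁ * (x-c) from by ring,
      abs_le]
    constructor <;> nlinarith [hcore'.1, hcore'.2]
end

section
/- Let a ∈ ℝ, α ∈ (0,1), β ∈ ℝ, γ = (1−α)/(2−α), and let f : ℝ → ℝ be f(y) = (a/2)y². Then for all x, c with x ≠ c: δ^{α,β}_c f(x) = a(β−γ)(x−c) + a·x. -/
private lemma key_int (α p q b : ℝ) (hα : α ∈ Set.Ioo (0:ℝ) 1) (hb : 0 < b) :
    ∫ u in (0:ℝ)..b, (p + q * u) / |u| ^ α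
      = p * b ^ (1 - α) / (1 - α) + q * b ^ (2 - α) / (2 - α) := by
  obtain ⟨h0, h1⟩ := hα
  have hne1 : (1:ℝ) - α ≠ 0 := by linarith
  have hcongr : Set.EqOn (fun u : ℝ => (p + q * u) / |u| ^ α)
      (fun u : ℝ => p * u ^ (-α) + q * u ^ (1 - α)) (Set.uIcc 0 b) := by
    intro u hu
    rw [Set.uIcc_of_le hb.le] at hu
    rcases eq_or_lt_of_le hu.1 with h | h
    · simp [← h, Real.zero_rpow h0.ne', Real.zero_rpow (neg_ne_zero.mpr h0.ne'),
        Real.zero_rpow hne1]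
    · simp only [abs_of_pos h]
      rw [Real.rpow_sub h, Real.rpow_one, Real.rpow_neg h.le, add_div]
      ring
  rw [intervalIntegral.integral_congr hcongr]
  have i1 : IntervalIntegrable (fun u : ℝ => p * u ^ (-α)) MeasureTheory.volume 0 b :=
    (intervalIntegral.intervalIntegrable_rpow' (by linarith)).const_mul p
  have i2 : IntervalIntegrable (fun u : ℝ => q * u ^ (1 - α)) MeasureTheory.volume 0 b :=
    (intervalIntegral.intervalIntegrable_rpow' (by linarith)).const_mul q
  rw [intervalIntegral.integral_add i1 i2, intervalIntegral.integral_const_mul,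
    intervalIntegral.integral_const_mul, integral_rpow (Or.inl (by linarith)),
    integral_rpow (Or.inl (by linarith))]
  rw [Real.zero_rpow (by linarith : -α + 1 ≠ 0), Real.zero_rpow (by linarith : 1 - α + 1 ≠ 0)]
  norm_num
  rw [show -α + 1 = 1 - α by ring, show 1 - α + 1 = 2 - α by ring]
  ring

/-- explicit value of the fractional gradient operator on the quadratic
`y ↦ (a/2)·y²`. -/
theorem fracGrad_quadratic (a α β γ : ℝ) (hα : α ∈ Set.Ioo (0 : ℝ) 1)
    (hγ : γ = (1 - α) / (2 - α)) (f : ℝ → ℝ) (hf : f = fun y => a / 2 * y ^ 2) :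
    ∀ x c : ℝ, x ≠ c → fracGrad α β c f x = a * (β - γ) * (x - c) + a * x := by
  intro x c hxc
  subst hf hγ
  obtain ⟨h0, h1⟩ := hα
  have hne1 : (1:ℝ) - α ≠ 0 := by linarith
  have hne2 : (2:ℝ) - α ≠ 0 := by linarith
  have hG : 0 < Real.Gamma (1 - α) := Real.Gamma_pos_of_pos (by linarith)
  have hΓ2 : Real.Gamma (2 - α) = (1 - α) * Real.Gamma (1 - α) := by
    rw [show (2:ℝ) - α = (1 - α) + 1 by ring, Real.Gamma_add_one hne1]
  have hdf : deriv (fun y : ℝ => a / 2 * y ^ 2) = fun t => a * t := by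
    funext y
    simp [deriv_const_mul_field]
    ring
  have hda : deriv (fun t : ℝ => a * t) = fun _ : ℝ => a := by
    funext y
    simpa using ((hasDerivAt_id y).const_mul a).deriv
  rw [fracGrad, if_neg hxc, caputo, caputoSucc]
  simp only [hdf, hda]
  rcases hxc.lt_or_gt with h | h
  · -- x < c
    have hb : 0 < c - x := by linarith
    have habs : |x - c| = c - x := by rw [abs_sub_comm]; exact abs_of_pos hb
    have hsign : Real.sign (x - c) = -1 := Real.sign_of_neg (by linarith)
    have base1 : ∫ t in x..c, a * t / |x - t| ^ α
        = a * x * (c - x) ^ (1 - α) / (1 - α) + a * (c - x) ^ (2 - α) / (2 - α) := by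
      have e : Set.EqOn (fun t : ℝ => a * t / |x - t| ^ α)
          (fun t : ℝ => (fun u : ℝ => (a * x + a * u) / |u| ^ α) (t - x)) (Set.uIcc x c) := by
        intro t _
        simp only
        rw [abs_sub_comm]
        congr 1
        ring
      rw [intervalIntegral.integral_congr e,
        intervalIntegral.integral_comp_sub_right (fun u : ℝ => (a * x + a * u) / |u| ^ α) x,
        sub_self]
      exact key_int α (a * x) a (c - x) ⟨h0, h1⟩ hb
    have base2 : ∫ t in x..c, a / |x - t| ^ α
        = a * (c - x) ^ (1 - α) / (1 - α) + 0 * (c - x) ^ (2 - α) / (2 - α) := by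
      have e : Set.EqOn (fun t : ℝ => a / |x - t| ^ α)
          (fun t : ℝ => (fun u : ℝ => (a + 0 * u) / |u| ^ α) (t - x)) (Set.uIcc x c) := by
        intro t _
        simp only
        rw [abs_sub_comm]
        congr 1
        ring
      rw [intervalIntegral.integral_congr e,
        intervalIntegral.integral_comp_sub_right (fun u : ℝ => (a + 0 * u) / |u| ^ α) x,
        sub_self]
      exact key_int α a 0 (c - x) ⟨h0, h1⟩ hb
    rw [intervalIntegral.integral_symm x c, intervalIntegral.integral_symm x c, base1, base2,
      habs, hsign, hΓ2]
    have hP : (0:ℝ) < (c - x) ^ α := Real.rpow_pos_of_pos hb α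
    have e1 : (c - x) ^ (1 - α) = (c - x) / (c - x) ^ α := by
      rw [Real.rpow_sub hb, Real.rpow_one]
    have e2 : (c - x) ^ (2 - α) = (c - x) ^ 2 / (c - x) ^ α := by
      rw [Real.rpow_sub hb]
      congr 1
      rw [show (2:ℝ) = ((2:ℕ):ℝ) by norm_num, Real.rpow_natCast]
    rw [e1, e2]
    have hxc' : x - c ≠ 0 := sub_ne_zero.mpr hxc
    field_simp
    ring
  · -- c < x
    have hb : 0 < x - c := by linarith
    have habs : |x - c| = x - c := abs_of_pos hb
    have hsign : Real.sign (x - c) = 1 := Real.sign_of_pos hb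
    have base1 : ∫ t in c..x, a * t / |x - t| ^ α
        = a * x * (x - c) ^ (1 - α) / (1 - α) + (-a) * (x - c) ^ (2 - α) / (2 - α) := by
      have e : Set.EqOn (fun t : ℝ => a * t / |x - t| ^ α)
          (fun t : ℝ => (fun u : ℝ => (a * x + (-a) * u) / |u| ^ α) (x - t)) (Set.uIcc c x) := by
        intro t _
        simp only
        congr 1
        ring
      rw [intervalIntegral.integral_congr e,
        intervalIntegral.integral_comp_sub_left (fun u : ℝ => (a * x + (-a) * u) / |u| ^ α) x,
        sub_self]
      exact key_int α (a * x) (-a) (x - c) ⟨h0, h1⟩ hb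
    have base2 : ∫ t in c..x, a / |x - t| ^ α
        = a * (x - c) ^ (1 - α) / (1 - α) + 0 * (x - c) ^ (2 - α) / (2 - α) := by
      have e : Set.EqOn (fun t : ℝ => a / |x - t| ^ α)
          (fun t : ℝ => (fun u : ℝ => (a + 0 * u) / |u| ^ α) (x - t)) (Set.uIcc c x) := by
        intro t _
        simp only
        congr 1
        ring
      rw [intervalIntegral.integral_congr e,
        intervalIntegral.integral_comp_sub_left (fun u : ℝ => (a + 0 * u) / |u| ^ α) x,
        sub_self]
      exact key_int α a 0 (x - c) ⟨h0, h1⟩ hb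
    rw [base1, base2, habs, hsign, hΓ2]
    have hP : (0:ℝ) < (x - c) ^ α := Real.rpow_pos_of_pos hb α
    have e1 : (x - c) ^ (1 - α) = (x - c) / (x - c) ^ α := by
      rw [Real.rpow_sub hb, Real.rpow_one]
    have e2 : (x - c) ^ (2 - α) = (x - c) ^ 2 / (x - c) ^ α := by
      rw [Real.rpow_sub hb]
      congr 1
      rw [show (2:ℝ) = ((2:ℕ):ℝ) by norm_num, Real.rpow_natCast]
    rw [e1, e2]
    field_simp
    ring
end
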